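/- arXiv:math/0605014 — 5 statements merged into one kernel-verified Lean document; each statement's English description precedes it below -/
import Mathlib

section
/- Let n ≥ 2 be an integer, and let f, g: [0,∞) → [0,∞) be continuous, log-concave functions, C²-smooth on (0,∞), such that f(0) > 0, g(0) > 0, ∫₀^∞ f < ∞ and ∫₀^∞ g < ∞. Assume that for all t ≥ 0, |f(t) − g(t)| ≤ e^{−5n} min{f(0), g(0)}. Then (1 − e^{−n}) t_n(g) ≤ t_n(f) ≤ (1 + e^{−n}) t_n(g). -/
open MeasureTheory Real Set Filter
open scoped ENNReal NNReal
open Topology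

set_option maxHeartbeats 1000000

noncomputable section

/-- A function `f : [0,∞) → [0,∞)` is log-concave. -/
def LogConcaveOnNonneg (f : ℝ → ℝ) : Prop :=
  ∀ x : ℝ, 0 ≤ x → ∀ y : ℝ, 0 ≤ y → ∀ l : ℝ, 0 < l → l < 1 →
    f x ^ l * f y ^ (1 - l) ≤ f (l * x + (1 - l) * y)

/-- `t` is the point `t_p(f)`: the (unique) `t > 0` with `f(t) > 0` and
`f′(t)/f(t) = −(p−1)/t`. -/
def IsTp (p : ℝ) (f : ℝ → ℝ) (t : ℝ) : Prop :=
  0 < t ∧ 0 < f t ∧ derivWithin f (Set.Ioi 0) t / f t = -(p - 1) / t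

lemma tangent_aux {f : ℝ → ℝ} (hf_smooth : ContDiffOn ℝ 2 f (Set.Ioi 0))
    (hf_lc : LogConcaveOnNonneg f)
    {t : ℝ} (ht : 0 < t) (hft : 0 < f t) {r : ℝ} (hr : 0 ≤ r) :
    f r ≤ f t * Real.exp ((derivWithin f (Set.Ioi 0) t / f t) * (r - t)) := by
  rcases le_or_gt (f r) 0 with h0 | hfr
  · exact h0.trans (by positivity)
  have hmem : Set.Ioi (0:ℝ) ∈ 𝓝 t := isOpen_Ioi.mem_nhds ht
  have hdf : DifferentiableAt ℝ f t :=
    (hf_smooth.differentiableOn (by norm_num)).differentiableAt hmem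
  have hdw : derivWithin f (Set.Ioi 0) t = deriv f t :=
    derivWithin_of_isOpen isOpen_Ioi ht
  rw [hdw]
  set c : ℝ := deriv f t / f t * (r - t) with hc
  set h : ℝ → ℝ := fun l : ℝ => Real.log (f (t + l * (r - t))) with hh
  have hinner : HasDerivAt (fun l : ℝ => t + l * (r - t)) (r - t) 0 := by
    simpa using ((hasDerivAt_id (0:ℝ)).mul_const (r - t)).const_add t
  have hcomp : HasDerivAt (fun l : ℝ => f (t + l * (r - t))) (deriv f t * (r - t)) 0 := by
    have hdf' : HasDerivAt f (deriv f t) (t + 0 * (r - t)) := by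
      simpa using hdf.hasDerivAt
    exact hdf'.comp 0 hinner
  have hlog : HasDerivAt h c 0 := by
    have := hcomp.log (by simpa using hft.ne')
    simpa [hh, hc, div_mul_eq_mul_div] using this
  have hslope := hasDerivAt_iff_tendsto_slope.mp hlog
  have hslope' : Tendsto (slope h 0) (𝓝[>] 0) (𝓝 c) :=
    hslope.mono_left (nhdsWithin_mono 0 (fun x hx => ne_of_gt hx))
  have hev : ∀ᶠ l in 𝓝[>] (0:ℝ), Real.log (f r) - Real.log (f t) ≤ slope h 0 l := by
    have hIoo : Set.Ioo (0:ℝ) 1 ∈ 𝓝[>] (0:ℝ) :=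
      Ioo_mem_nhdsGT_of_mem (by constructor <;> norm_num)
    filter_upwards [hIoo] with l hl
    obtain ⟨hl0, hl1⟩ := hl
    have key := hf_lc r hr t ht.le l hl0 hl1
    have heq : l * r + (1 - l) * t = t + l * (r - t) := by ring
    rw [heq] at key
    have hprod : 0 < f r ^ l * f t ^ (1 - l) := by positivity
    have hpt : 0 < f (t + l * (r - t)) := lt_of_lt_of_le hprod key
    have hlogle : Real.log (f r ^ l * f t ^ (1 - l)) ≤ h l :=
      Real.log_le_log hprod key
    rw [Real.log_mul (by positivity) (by positivity), Real.log_rpow hfr,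
      Real.log_rpow hft] at hlogle
    have h0v : h 0 = Real.log (f t) := by simp [hh]
    have : slope h 0 l = (h l - h 0) / l := by
      simp [slope_def_field]
    rw [this, h0v, le_div_iff₀ hl0]
    nlinarith [hlogle]
  have hle : Real.log (f r) - Real.log (f t) ≤ c :=
    ge_of_tendsto hslope' hev
  have : Real.log (f r) ≤ Real.log (f t) + c := by linarith
  calc f r = Real.exp (Real.log (f r)) := (Real.exp_log hfr).symm
    _ ≤ Real.exp (Real.log (f t) + c) := Real.exp_le_exp.mpr this
    _ = f t * Real.exp c := by rw [Real.exp_add, Real.exp_log hft]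

/-- Tangent bound at a `t_p` point, with `p - 1 = k` a natural number. -/
lemma tp_tangent {f : ℝ → ℝ} (hf_smooth : ContDiffOn ℝ 2 f (Set.Ioi 0))
    (hf_lc : LogConcaveOnNonneg f) {p t : ℝ} (h : IsTp p f t) {r : ℝ} (hr : 0 ≤ r) :
    f r ≤ f t * Real.exp (-(p - 1) / t * (r - t)) := by
  obtain ⟨ht, hft, hd⟩ := h
  have := tangent_aux hf_smooth hf_lc ht hft hr
  rwa [hd] at this

/-- `r ^ k * f r` is maximized at the `t_{k+1}` point. -/
lemma F_max {f : ℝ → ℝ} (hf_smooth : ContDiffOn ℝ 2 f (Set.Ioi 0))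
    (hf_lc : LogConcaveOnNonneg f) {k : ℕ} (hk : 1 ≤ k) {t : ℝ}
    (h : IsTp ((k : ℝ) + 1) f t) {r : ℝ} (hr : 0 ≤ r) :
    r ^ k * f r ≤ t ^ k * f t := by
  have ht := h.1
  have hft := h.2.1
  rcases eq_or_lt_of_le hr with rfl | hr0
  · rw [zero_pow (by omega)]
    nlinarith [pow_pos ht k]
  have htan := tp_tangent hf_smooth hf_lc h hr
  simp only [add_sub_cancel_right] at htan
  set x : ℝ := r / t with hx
  have hx0 : 0 < x := div_pos hr0 ht
  have hxe : x ≤ Real.exp (x - 1) := by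
    have := Real.add_one_le_exp (x - 1); linarith
  have hpow : x ^ k ≤ Real.exp ((k : ℝ) * (x - 1)) := by
    rw [Real.exp_nat_mul]
    exact pow_le_pow_left₀ hx0.le hxe k
  have hexp : -(k : ℝ) / t * (r - t) = -((k : ℝ) * (x - 1)) := by
    field_simp [hx]
    have htx : t * x = r := by rw [hx]; field_simp [ht.ne']
    linear_combination htx
  have hfr : f r ≤ f t * Real.exp (-((k : ℝ) * (x - 1))) := by rwa [hexp] at htan
  have hrk : r ^ k = x ^ k * t ^ k := by
    rw [hx, div_pow]; field_simp
  calc r ^ k * f r ≤ x ^ k * t ^ k * (f t * Real.exp (-((k : ℝ) * (x - 1)))) := by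
        rw [hrk]
        apply mul_le_mul_of_nonneg_left hfr (by positivity)
    _ ≤ Real.exp ((k : ℝ) * (x - 1)) * t ^ k * (f t * Real.exp (-((k : ℝ) * (x - 1)))) := by
        have hp : (0:ℝ) < t ^ k * (f t * Real.exp (-((k : ℝ) * (x - 1)))) := by positivity
        nlinarith [hpow, hp]
    _ = t ^ k * f t := by
        rw [show rexp ((k:ℝ) * (x - 1)) * t ^ k * (f t * rexp (-((k:ℝ) * (x - 1)))) =
          t ^ k * f t * (rexp ((k:ℝ) * (x - 1)) * rexp (-((k:ℝ) * (x - 1)))) by ring,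
          ← Real.exp_add]
        simp
lemma pow_rpow_comm {x : ℝ} (hx : 0 ≤ x) (k : ℕ) (l : ℝ) :
    (x ^ l) ^ k = (x ^ k) ^ l := by
  rw [← Real.rpow_natCast (x ^ l) k, ← Real.rpow_mul hx, mul_comm,
    Real.rpow_mul hx, Real.rpow_natCast]

lemma aux_xexp {x : ℝ} (hx : 0 ≤ x) : x * Real.exp (-x) ≤ 1 := by
  have h1 : x ≤ Real.exp x := by nlinarith [Real.add_one_le_exp x]
  have h2 := mul_le_mul_of_nonneg_right h1 (Real.exp_nonneg (-x))
  rwa [← Real.exp_add, add_neg_cancel, Real.exp_zero] at h2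

lemma aux_B2 {e : ℝ} (he0 : 0 < e) (he7 : e ≤ 1 / 7) :
    (1 + e) * Real.exp (-e) ≤ 1 - e ^ 2 / 5 := by
  have hq : 1 + e + e ^ 2 / 4 ≤ Real.exp e := by
    have h2 : 1 + e / 2 ≤ Real.exp (e / 2) := by linarith [Real.add_one_le_exp (e / 2)]
    have hmul : (1 + e / 2) * (1 + e / 2) ≤ Real.exp (e / 2) * Real.exp (e / 2) :=
      mul_le_mul h2 h2 (by linarith) (Real.exp_nonneg _)
    have hsq : Real.exp (e / 2) * Real.exp (e / 2) = Real.exp e := by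
      rw [← Real.exp_add]; ring_nf
    rw [hsq] at hmul
    nlinarith [hmul]
  have hinv : Real.exp (-e) ≤ 1 / (1 + e + e ^ 2 / 4) := by
    rw [Real.exp_neg, one_div]
    exact inv_anti₀ (by positivity) hq
  have hd : (0 : ℝ) < 1 + e + e ^ 2 / 4 := by positivity
  have h3 : (1 + e) / (1 + e + e ^ 2 / 4) ≤ 1 - e ^ 2 / 5 := by
    rw [div_le_iff₀ hd]
    have e3 : e ^ 2 * e ≤ e ^ 2 * (1 / 7) :=
      mul_le_mul_of_nonneg_left he7 (sq_nonneg e)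
    have e2 : e ^ 2 ≤ 1 / 49 := by nlinarith [sq_nonneg (e - 1/7)]
    have e4 : e ^ 2 * e ^ 2 ≤ e ^ 2 * (1 / 49) :=
      mul_le_mul_of_nonneg_left e2 (sq_nonneg e)
    nlinarith [sq_nonneg e, e3, e4]
  calc (1 + e) * Real.exp (-e) ≤ (1 + e) * (1 / (1 + e + e ^ 2 / 4)) :=
        mul_le_mul_of_nonneg_left hinv (by positivity)
    _ = (1 + e) / (1 + e + e ^ 2 / 4) := by ring
    _ ≤ 1 - e ^ 2 / 5 := h3

lemma key_onesided (n : ℕ) (hn : 2 ≤ n) (f g : ℝ → ℝ)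
    (hf_smooth : ContDiffOn ℝ 2 f (Set.Ioi 0)) (hg_smooth : ContDiffOn ℝ 2 g (Set.Ioi 0))
    (hf_lc : LogConcaveOnNonneg f) (hg_lc : LogConcaveOnNonneg g)
    (hf0 : 0 < f 0) (hg0 : 0 < g 0)
    (hclose : ∀ t : ℝ, 0 ≤ t → |f t - g t| ≤ Real.exp (-(5 * n)) * min (f 0) (g 0))
    {tf tg : ℝ} (htf : IsTp n f tf) (htg : IsTp n g tg) :
    tf ≤ (1 + Real.exp (-(n : ℝ))) * tg := by
  by_contra hcon
  push_neg at hcon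
  -- notation
  set ε : ℝ := Real.exp (-(n : ℝ)) with hεdef
  set m : ℝ := min (f 0) (g 0) with hmdef
  set δ : ℝ := Real.exp (-(5 * (n : ℝ))) * m with hδdef
  clear_value ε m δ
  obtain ⟨k, hkn⟩ : ∃ k : ℕ, n = k + 1 := ⟨n - 1, by omega⟩
  have hk : 1 ≤ k := by omega
  have hkr : (k : ℝ) = (n : ℝ) - 1 := by rw [hkn]; push_cast; ring
  have hkr' : ((k : ℝ) + 1) = (n : ℝ) := by rw [hkr]; ring
  have htf' : IsTp ((k : ℝ) + 1) f tf := by rwa [hkr']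
  have htg' : IsTp ((k : ℝ) + 1) g tg := by rwa [hkr']
  have htfpos := htf.1
  have htgpos := htg.1
  have hftf := htf.2.1
  have hgtg := htg.2.1
  have hm : 0 < m := hmdef ▸ lt_min hf0 hg0
  have hδpos : 0 < δ := by rw [hδdef]; positivity
  have hε0 : 0 < ε := hεdef ▸ Real.exp_pos _
  -- ε ≤ 1/7
  have hn2 : (2 : ℝ) ≤ (n : ℝ) := by exact_mod_cast hn
  have hε7 : ε ≤ 1 / 7 := by
    have h1 : ε ≤ Real.exp (-2) := by rw [hεdef]; exact Real.exp_le_exp.mpr (by linarith)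
    have h2 : Real.exp (-2 : ℝ) ≤ 1 / 7 := by
      rw [Real.exp_neg]
      rw [inv_le_comm₀ (Real.exp_pos _) (by norm_num)]
      have : Real.exp (2 : ℝ) = Real.exp 1 ^ 2 := by
        rw [← Real.exp_nat_mul]; norm_num
      nlinarith [Real.exp_one_gt_d9]
    linarith
  -- lower bound for g tg
  have hgtg_lb : Real.exp (-(k : ℝ)) * m ≤ g tg := by
    have h1 := tp_tangent hg_smooth hg_lc htg' (le_refl (0 : ℝ))
    have he : -((k : ℝ) + 1 - 1) / tg * (0 - tg) = (k : ℝ) := by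
      field_simp
      ring
    rw [he] at h1
    have h2 : m ≤ g 0 := hmdef ▸ min_le_right _ _
    calc Real.exp (-(k : ℝ)) * m ≤ Real.exp (-(k : ℝ)) * (g tg * Real.exp (k : ℝ)) := by
          have : m ≤ g tg * Real.exp (k : ℝ) := le_trans h2 h1
          exact mul_le_mul_of_nonneg_left this (Real.exp_nonneg _)
      _ = g tg := by rw [mul_comm (g tg), ← mul_assoc, ← Real.exp_add]; simp
  -- f tg is close to g tg
  have hclose_tg := abs_le.mp (hclose tg htgpos.le)
  have hftg_lb : g tg - δ ≤ f tg := by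
    have := hclose_tg.1; linarith
  have hδsmall : δ < Real.exp (-(k : ℝ)) * m := by
    rw [hδdef]
    have : Real.exp (-(5 * (n : ℝ))) < Real.exp (-(k : ℝ)) := by
      apply Real.exp_lt_exp.mpr; rw [hkr]; linarith
    nlinarith
  have hftg_pos : 0 < f tg := by linarith
  -- the comparison point t'
  set t' : ℝ := (1 + ε) * tg with ht'def
  clear_value t'
  have ht'pos : 0 < t' := by rw [ht'def]; positivity
  have htgt' : tg < t' := by nlinarith
  have ht'tf : t' < tf := hcon
  -- F max for f
  have hFmax : tg ^ k * f tg ≤ tf ^ k * f tf := F_max hf_smooth hf_lc hk htf' htgpos.le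
  -- decay of g beyond tg
  have hA2 : g t' ≤ g tg * Real.exp (-(k : ℝ) * ε) := by
    have h1 := tp_tangent hg_smooth hg_lc htg' ht'pos.le
    have he : -((k : ℝ) + 1 - 1) / tg * (t' - tg) = -(k : ℝ) * ε := by
      rw [ht'def]; field_simp; ring
    rwa [he] at h1
  -- log-concavity interpolation: F t' ≥ F tg
  have hFt' : tg ^ k * f tg ≤ t' ^ k * f t' := by
    set l : ℝ := (tf - t') / (tf - tg) with hldef
    have hne : tf - tg > 0 := by linarith
    have hl0 : 0 < l := div_pos (by linarith) hne
    have hl1 : l < 1 := by rw [div_lt_one hne]; linarith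
    have heq : l * tg + (1 - l) * tf = t' := by
      rw [hldef, div_mul_eq_mul_div, one_sub_div hne.ne', div_mul_eq_mul_div, ← add_div,
        div_eq_iff hne.ne']; ring
    have hlc := hf_lc tg htgpos.le tf htfpos.le l hl0 hl1
    rw [heq] at hlc
    have hag : tg ^ l * tf ^ (1 - l) ≤ t' := by
      have := Real.geom_mean_le_arith_mean2_weighted (w₁ := l) (w₂ := 1 - l)
        (p₁ := tg) (p₂ := tf) hl0.le (by linarith) htgpos.le htfpos.le (by ring)
      rw [heq] at this; exact this
    have ha : (0 : ℝ) < tg ^ k * f tg := by positivity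
    have hb : (0 : ℝ) < tf ^ k * f tf := by positivity
    have step1 : (tg ^ l * tf ^ (1 - l)) ^ k * (f tg ^ l * f tf ^ (1 - l)) ≤
        t' ^ k * f t' := by
      apply mul_le_mul
      · exact pow_le_pow_left₀ (by positivity) hag k
      · exact hlc
      · positivity
      · positivity
    have step2 : (tg ^ l * tf ^ (1 - l)) ^ k * (f tg ^ l * f tf ^ (1 - l)) =
        (tg ^ k * f tg) ^ l * (tf ^ k * f tf) ^ (1 - l) := by
      rw [mul_pow, pow_rpow_comm htgpos.le, pow_rpow_comm htfpos.le,
        Real.mul_rpow (by positivity) (by positivity),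
        Real.mul_rpow (by positivity) (by positivity)]
      ring
    have step3 : (tg ^ k * f tg) ≤ (tg ^ k * f tg) ^ l * (tf ^ k * f tf) ^ (1 - l) := by
      have h1 : (tg ^ k * f tg) ^ (1 - l) ≤ (tf ^ k * f tf) ^ (1 - l) :=
        Real.rpow_le_rpow ha.le hFmax (by linarith)
      calc (tg ^ k * f tg) = (tg ^ k * f tg) ^ l * (tg ^ k * f tg) ^ (1 - l) := by
            rw [← Real.rpow_add ha]; simp
        _ ≤ (tg ^ k * f tg) ^ l * (tf ^ k * f tf) ^ (1 - l) :=
            mul_le_mul_of_nonneg_left h1 (by positivity)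
    calc tg ^ k * f tg ≤ (tg ^ k * f tg) ^ l * (tf ^ k * f tf) ^ (1 - l) := step3
      _ = (tg ^ l * tf ^ (1 - l)) ^ k * (f tg ^ l * f tf ^ (1 - l)) := step2.symm
      _ ≤ t' ^ k * f t' := step1
  -- f t' close to g t'
  have hft'_ub : f t' ≤ g t' + δ := by
    have := (abs_le.mp (hclose t' ht'pos.le)).2
    linarith
  -- assemble
  set E : ℝ := Real.exp (-(k : ℝ) * ε) with hEdef
  clear_value E
  have hEpos : 0 < E := hEdef ▸ Real.exp_pos _
  have hmain : tg ^ k * (g tg - δ) ≤ tg ^ k * ((1 + ε) ^ k * (g tg * E + δ)) := by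
    have c1 : tg ^ k * (g tg - δ) ≤ tg ^ k * f tg :=
      mul_le_mul_of_nonneg_left hftg_lb (by positivity)
    have c2 : t' ^ k * f t' ≤ t' ^ k * (g tg * E + δ) := by
      apply mul_le_mul_of_nonneg_left _ (by positivity)
      linarith
    have c3 : t' ^ k * (g tg * E + δ) = tg ^ k * ((1 + ε) ^ k * (g tg * E + δ)) := by
      rw [ht'def, mul_pow]; ring
    rw [c3] at c2
    linarith [hFt', c1, c2]
  have hstar : g tg - δ ≤ (1 + ε) ^ k * (g tg * E + δ) :=
    le_of_mul_le_mul_left hmain (by positivity)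
  -- numeric bounds
  have hB2 : (1 + ε) * Real.exp (-ε) ≤ 1 - ε ^ 2 / 5 := aux_B2 hε0 hε7
  have hB3 : (1 + ε) ^ k * E ≤ 1 - ε ^ 2 / 5 := by
    have h1 : (1 + ε) ^ k * E = ((1 + ε) * Real.exp (-ε)) ^ k := by
      rw [mul_pow, hEdef, ← Real.exp_nat_mul]; ring_nf
    have h2 : ((1 + ε) * Real.exp (-ε)) ^ k ≤ (1 - ε ^ 2 / 5) ^ k :=
      pow_le_pow_left₀ (by positivity) hB2 k
    have h3 : (1 - ε ^ 2 / 5) ^ k ≤ (1 - ε ^ 2 / 5) ^ 1 :=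
      pow_le_pow_of_le_one (by nlinarith) (by nlinarith) hk
    rw [pow_one] at h3
    linarith
  have hB4 : (1 + ε) ^ k ≤ 3 := by
    have h1 : (1 + ε) ^ k ≤ Real.exp ε ^ k := by
      apply pow_le_pow_left₀ (by positivity)
      linarith [Real.add_one_le_exp ε]
    have h2 : Real.exp ε ^ k = Real.exp ((k : ℝ) * ε) := (Real.exp_nat_mul ε k).symm
    have hkε : (k : ℝ) * ε ≤ 1 := by
      have hle : (k : ℝ) ≤ (n : ℝ) := by rw [hkr]; linarith
      have : (n : ℝ) * ε ≤ 1 := by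
        rw [hεdef]; exact aux_xexp (by positivity)
      nlinarith
    have h3 : Real.exp ((k : ℝ) * ε) ≤ Real.exp 1 := Real.exp_le_exp.mpr hkε
    have h4 : Real.exp 1 < 3 := by nlinarith [Real.exp_one_lt_d9]
    calc (1 + ε) ^ k ≤ Real.exp ε ^ k := h1
      _ = Real.exp ((k : ℝ) * ε) := h2
      _ ≤ Real.exp 1 := h3
      _ ≤ 3 := h4.le
  -- combine: ε²/5 * g tg ≤ 4 δ
  have hcomb : ε ^ 2 / 5 * g tg ≤ 4 * δ := by
    have expand : (1 + ε) ^ k * (g tg * E + δ) =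
        ((1 + ε) ^ k * E) * g tg + (1 + ε) ^ k * δ := by ring
    rw [expand] at hstar
    have l1 : ((1 + ε) ^ k * E) * g tg ≤ (1 - ε ^ 2 / 5) * g tg :=
      mul_le_mul_of_nonneg_right hB3 hgtg.le
    have l2 : (1 + ε) ^ k * δ ≤ 3 * δ :=
      mul_le_mul_of_nonneg_right hB4 hδpos.le
    linarith
  -- final contradiction
  have hfin : ε ^ 2 / 5 * (Real.exp (-(k : ℝ)) * m) ≤ 4 * (Real.exp (-(5 * (n : ℝ))) * m) := by
    have := mul_le_mul_of_nonneg_left hgtg_lb (by positivity : (0:ℝ) ≤ ε ^ 2 / 5)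
    rw [hδdef] at hcomb
    linarith
  have hfin2 : ε ^ 2 * Real.exp (-(k : ℝ)) ≤ 20 * Real.exp (-(5 * (n : ℝ))) := by
    nlinarith [hm]
  have hε2 : ε ^ 2 = Real.exp (-(2 * (n : ℝ))) := by
    rw [hεdef, sq, ← Real.exp_add]; ring_nf
  have hlhs : ε ^ 2 * Real.exp (-(k : ℝ)) = Real.exp (1 - 3 * (n : ℝ)) := by
    rw [hε2, ← Real.exp_add, hkr]; ring_nf
  have h20 : Real.exp (2 * (n : ℝ) + 1) ≤ 20 := by
    have h1 : Real.exp (1 - 3 * (n : ℝ)) ≤ 20 * Real.exp (-(5 * (n : ℝ))) := by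
      rw [← hlhs]; linarith [hfin2]
    have h2 : Real.exp (2 * (n : ℝ) + 1) * Real.exp (-(5 * (n : ℝ))) =
        Real.exp (1 - 3 * (n : ℝ)) := by
      rw [← Real.exp_add]; ring_nf
    nlinarith [h1, h2, Real.exp_pos (-(5 * (n : ℝ)))]
  have h5 : Real.exp (5 : ℝ) ≤ Real.exp (2 * (n : ℝ) + 1) :=
    Real.exp_le_exp.mpr (by linarith)
  have h27 : (2.7 : ℝ) < Real.exp 1 := by
    have := Real.exp_one_gt_d9; norm_num at this ⊢; linarith
  have hp5 : (2.7 : ℝ) ^ 5 < Real.exp 1 ^ 5 :=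
    pow_lt_pow_left₀ h27 (by norm_num) (by norm_num)
  have he5 : Real.exp (5 : ℝ) = Real.exp 1 ^ 5 := by
    rw [← Real.exp_nat_mul]; norm_num
  rw [he5] at h5
  norm_num at hp5
  linarith

/-- Klartag, Lemma 4.4: if two continuous log-concave functions on `[0,∞)`, `C²`-smooth on
`(0,∞)`, positive at `0` and with finite integral, are uniformly within
`e^{−5n} min{f(0), g(0)}` of each other, then `t_n(f)` and `t_n(g)` differ by a factor of at
most `1 ± e^{−n}`. -/
theorem tn_stability
    (n : ℕ) (hn : 2 ≤ n) (f g : ℝ → ℝ)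
    (hf_nonneg : ∀ t : ℝ, 0 ≤ t → 0 ≤ f t) (hg_nonneg : ∀ t : ℝ, 0 ≤ t → 0 ≤ g t)
    (hf_cont : ContinuousOn f (Set.Ici 0)) (hg_cont : ContinuousOn g (Set.Ici 0))
    (hf_smooth : ContDiffOn ℝ 2 f (Set.Ioi 0)) (hg_smooth : ContDiffOn ℝ 2 g (Set.Ioi 0))
    (hf_lc : LogConcaveOnNonneg f) (hg_lc : LogConcaveOnNonneg g)
    (hf0 : 0 < f 0) (hg0 : 0 < g 0)
    (hf_int : IntegrableOn f (Set.Ioi 0)) (hg_int : IntegrableOn g (Set.Ioi 0))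
    (hclose : ∀ t : ℝ, 0 ≤ t → |f t - g t| ≤ Real.exp (-(5 * n)) * min (f 0) (g 0)) :
    ∀ tf tg : ℝ, IsTp n f tf → IsTp n g tg →
      (1 - Real.exp (-(n : ℝ))) * tg ≤ tf ∧ tf ≤ (1 + Real.exp (-(n : ℝ))) * tg := by
  intro tf tg htf htg
  have h1 := key_onesided n hn f g hf_smooth hg_smooth hf_lc hg_lc hf0 hg0 hclose htf htg
  have hclose' : ∀ t : ℝ, 0 ≤ t → |g t - f t| ≤ Real.exp (-(5 * n)) * min (g 0) (f 0) := by
    intro t ht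
    rw [abs_sub_comm, min_comm]
    exact hclose t ht
  have h2 := key_onesided n hn g f hg_smooth hf_smooth hg_lc hf_lc hg0 hf0 hclose' htg htf
  refine ⟨?_, h1⟩
  have hε0 : 0 < Real.exp (-(n : ℝ)) := Real.exp_pos _
  have hn2 : (2 : ℝ) ≤ (n : ℝ) := by exact_mod_cast hn
  have hε1 : Real.exp (-(n : ℝ)) < 1 := by
    have : Real.exp (-(n : ℝ)) < Real.exp 0 := Real.exp_lt_exp.mpr (by linarith)
    simpa using this
  have hmul := mul_le_mul_of_nonneg_left h2
    (by linarith : (0 : ℝ) ≤ 1 - Real.exp (-(n : ℝ)))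
  nlinarith [htf.1, htg.1, hmul, hε0, hε1, sq_nonneg (Real.exp (-(n : ℝ)))]
end
end

section
/- There exist universal constants C > 1 and 0 < c < 1 such that the following holds: let n ≥ 2 be an integer, and let f: [0,∞) → [0,∞) be a continuous, log-concave function, C²-smooth on (0,∞), with 0 < ∫₀^∞ f < ∞. Then for all 0 ≤ ε ≤ 1, ∫_{t_n(f)(1−ε)}^{t_n(f)(1+ε)} t^{n−1} f(t) dt ≥ (1 − C e^{−c ε² n}) ∫₀^∞ t^{n−1} f(t) dt. -/
open MeasureTheory Real Set Filter Topology
open scoped ENNReal NNReal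

noncomputable section

/- ### Auxiliary elementary inequalities -/

lemma aux_log_one_add_le {ε : ℝ} (h0 : 0 ≤ ε) (h1 : ε ≤ 1) :
    Real.log (1 + ε) ≤ ε - ε ^ 2 / 8 := by
  rw [Real.log_le_iff_le_exp (by linarith)]
  set y : ℝ := ε - ε ^ 2 / 8 with hy
  have hsq : ε ^ 2 ≤ ε := by nlinarith [sq_nonneg ε]
  have hy0 : 0 ≤ y := by rw [hy]; nlinarith
  have h2 : (1 + y / 3) ≤ Real.exp (y / 3) := by
    have := Real.add_one_le_exp (y / 3); linarith
  have h3 : (1 + y / 3) ^ 3 ≤ Real.exp (y / 3) ^ 3 :=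
    pow_le_pow_left₀ (by nlinarith) h2 3
  rw [← Real.exp_nat_mul] at h3
  have hyge : 7 * ε / 8 ≤ y := by rw [hy]; nlinarith
  have hy2 : 49 * ε ^ 2 / 64 ≤ y ^ 2 := by nlinarith
  have hy3 : 0 ≤ y ^ 3 := pow_nonneg hy0 3
  calc 1 + ε ≤ (1 + y / 3) ^ 3 := by rw [hy] at hy2 hy3 ⊢; nlinarith
    _ ≤ _ := h3.trans_eq (by norm_num; ring_nf)

lemma aux_log_one_sub_le {ε : ℝ} (h0 : 0 ≤ ε) (h1 : ε < 1) :
    Real.log (1 - ε) ≤ -ε - ε ^ 2 / 4 := by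
  rw [Real.log_le_iff_le_exp (by linarith)]
  have h2 : (1 - (ε + ε ^ 2 / 4) / 2) ≤ Real.exp (-((ε + ε ^ 2 / 4) / 2)) := by
    have := Real.add_one_le_exp (-((ε + ε ^ 2 / 4) / 2)); linarith
  have h3 : (1 - (ε + ε ^ 2 / 4) / 2) ^ 2 ≤ Real.exp (-((ε + ε ^ 2 / 4) / 2)) ^ 2 :=
    pow_le_pow_left₀ (by nlinarith) h2 2
  rw [← Real.exp_nat_mul] at h3
  calc 1 - ε ≤ (1 - (ε + ε ^ 2 / 4) / 2) ^ 2 := by nlinarith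
    _ ≤ _ := h3.trans_eq (by norm_num; ring_nf)

/- ### Exponential integrals -/

lemma exp_antideriv (lam c : ℝ) (hlam : 0 < lam) (t : ℝ) :
    HasDerivAt (fun s => -(Real.exp (-(lam * (s - c))) / lam)) (Real.exp (-(lam * (t - c)))) t := by
  have h1 : HasDerivAt (fun s : ℝ => -(lam * (s - c))) (-lam) t := by
    have h := (((hasDerivAt_id t).sub_const c).const_mul lam).neg
    simp only [mul_one] at h
    exact h
  have h2 := h1.exp
  have h3 := (h2.div_const lam).neg
  refine h3.congr_deriv ?_
  field_simp [hlam.ne']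

lemma exp_integrableOn_Ioi (lam c T : ℝ) (hlam : 0 < lam) :
    IntegrableOn (fun t => Real.exp (-(lam * (t - c)))) (Ioi T) := by
  have he : (fun t => Real.exp (-(lam * (t - c)))) = fun t => Real.exp (lam * c) * Real.exp (-lam * t) := by
    funext t; rw [← Real.exp_add]; ring_nf
  rw [he]
  exact (exp_neg_integrableOn_Ioi T hlam).const_mul _

lemma exp_int_Ioi (lam c T : ℝ) (hlam : 0 < lam) :
    ∫ t in Ioi T, Real.exp (-(lam * (t - c))) = Real.exp (-(lam * (T - c))) / lam := by
  have htend : Tendsto (fun s => -(Real.exp (-(lam * (s - c))) / lam)) atTop (𝓝 0) := by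
    have h1 : Tendsto (fun s : ℝ => -lam * s + lam * c) atTop atBot := by
      apply tendsto_atBot_add_const_right
      exact tendsto_id.const_mul_atTop_of_neg (by linarith)
    have h2 : Tendsto (fun s : ℝ => -(lam * (s - c))) atTop atBot := by
      convert h1 using 2 with s; ring
    have h3 := (tendsto_exp_atBot.comp h2).div_const lam
    simpa using h3.neg
  have := integral_Ioi_of_hasDerivAt_of_tendsto'
    (f := fun s => -(Real.exp (-(lam * (s - c))) / lam))
    (fun x _ => exp_antideriv lam c hlam x) (exp_integrableOn_Ioi lam c T hlam) htend
  rw [this]; ring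

lemma exp_int_Ioc (lam c x y : ℝ) (hlam : 0 < lam) (hxy : x ≤ y) :
    ∫ t in Ioc x y, Real.exp (-(lam * (t - c)))
      = (Real.exp (-(lam * (x - c))) - Real.exp (-(lam * (y - c)))) / lam := by
  rw [← intervalIntegral.integral_of_le hxy]
  rw [intervalIntegral.integral_eq_sub_of_hasDerivAt
    (fun t _ => exp_antideriv lam c hlam t)
    (Continuous.intervalIntegrable (by continuity) x y)]
  ring

lemma exp_antideriv' (lam c : ℝ) (hlam : 0 < lam) (t : ℝ) :
    HasDerivAt (fun s => Real.exp (-(lam * (c - s))) / lam) (Real.exp (-(lam * (c - t)))) t := by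
  have h1 : HasDerivAt (fun s : ℝ => -(lam * (c - s))) lam t := by
    have := (((hasDerivAt_id t).const_sub c).const_mul lam).neg
    exact this.congr_deriv (by ring)
  have h2 := h1.exp.div_const lam
  refine h2.congr_deriv ?_
  field_simp [hlam.ne']

lemma exp_int_Ioc' (lam c x y : ℝ) (hlam : 0 < lam) (hxy : x ≤ y) :
    ∫ t in Ioc x y, Real.exp (-(lam * (c - t)))
      = (Real.exp (-(lam * (c - y))) - Real.exp (-(lam * (c - x)))) / lam := by
  rw [← intervalIntegral.integral_of_le hxy]
  rw [intervalIntegral.integral_eq_sub_of_hasDerivAt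
    (fun t _ => exp_antideriv' lam c hlam t)
    (Continuous.intervalIntegrable (by continuity) x y)]
  ring

lemma contE1 (A lam c : ℝ) : Continuous fun t : ℝ => A * Real.exp (-(lam * (t - c))) :=
  continuous_const.mul
    (Real.continuous_exp.comp ((continuous_const.mul (continuous_id.sub continuous_const)).neg))

lemma contE2 (A mu c : ℝ) : Continuous fun t : ℝ => A * Real.exp (-(mu * (c - t))) :=
  continuous_const.mul
    (Real.continuous_exp.comp ((continuous_const.mul (continuous_const.sub continuous_id)).neg))

/- ### Concavity helpers -/

lemma log_concave3 {x y s : ℝ} (hx : 0 < x) (hy : 0 < y) (hxs : x < s) (hsy : s < y) :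
    (y - s) * Real.log x + (s - x) * Real.log y ≤ (y - x) * Real.log s := by
  have hyx0 : y - x ≠ 0 := by intro h; linarith
  have hl0 : 0 < (y - s) / (y - x) := div_pos (by linarith) (by linarith)
  have hl1 : (y - s) / (y - x) < 1 := (div_lt_one (by linarith)).2 (by linarith)
  have hcomb : (y - s) / (y - x) * x + (1 - (y - s) / (y - x)) * y = s := by
    field_simp; ring
  have h := strictConcaveOn_log_Ioi.concaveOn.2 (mem_Ioi.2 hx) (mem_Ioi.2 hy)
    hl0.le (by linarith : (0:ℝ) ≤ 1 - (y - s) / (y - x)) (by ring)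
  simp only [smul_eq_mul] at h
  rw [hcomb] at h
  have hyx : (0:ℝ) < y - x := by linarith
  have h2 := mul_le_mul_of_nonneg_left h hyx.le
  have e1 : (y - x) * ((y - s) / (y - x) * Real.log x + (1 - (y - s) / (y - x)) * Real.log y)
      = (y - s) * Real.log x + (s - x) * Real.log y := by field_simp; ring
  rw [e1] at h2
  linarith [h2]

lemma logconc_pos (f : ℝ → ℝ) (hlc : LogConcaveOnNonneg f) {x y s : ℝ}
    (hx : 0 ≤ x) (hfx : 0 < f x) (hy : 0 ≤ y) (hfy : 0 < f y) (hxs : x < s) (hsy : s < y) :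
    0 < f s := by
  have hyx0 : y - x ≠ 0 := by intro h; linarith
  have hl0 : 0 < (y - s) / (y - x) := div_pos (by linarith) (by linarith)
  have hl1 : (y - s) / (y - x) < 1 := (div_lt_one (by linarith)).2 (by linarith)
  have hcomb : (y - s) / (y - x) * x + (1 - (y - s) / (y - x)) * y = s := by
    field_simp; ring
  have h := hlc x hx y hy _ hl0 hl1
  rw [hcomb] at h
  exact lt_of_lt_of_le (mul_pos (Real.rpow_pos_of_pos hfx _) (Real.rpow_pos_of_pos hfy _)) h

lemma logconc_phi3 (f : ℝ → ℝ) (hlc : LogConcaveOnNonneg f) {x y s : ℝ}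
    (hx : 0 ≤ x) (hfx : 0 < f x) (hy : 0 ≤ y) (hfy : 0 < f y) (hxs : x < s) (hsy : s < y) :
    (y - s) * Real.log (f x) + (s - x) * Real.log (f y) ≤ (y - x) * Real.log (f s) := by
  have hyx0 : y - x ≠ 0 := by intro h; linarith
  have hl0 : 0 < (y - s) / (y - x) := div_pos (by linarith) (by linarith)
  have hl1 : (y - s) / (y - x) < 1 := (div_lt_one (by linarith)).2 (by linarith)
  have hcomb : (y - s) / (y - x) * x + (1 - (y - s) / (y - x)) * y = s := by
    field_simp; ring
  have h := hlc x hx y hy _ hl0 hl1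
  rw [hcomb] at h
  have hrp1 : (0:ℝ) < f x ^ ((y - s) / (y - x)) := Real.rpow_pos_of_pos hfx _
  have hrp2 : (0:ℝ) < f y ^ (1 - (y - s) / (y - x)) := Real.rpow_pos_of_pos hfy _
  have h2 := Real.log_le_log (mul_pos hrp1 hrp2) h
  rw [Real.log_mul hrp1.ne' hrp2.ne', Real.log_rpow hfx, Real.log_rpow hfy] at h2
  have hyx : (0:ℝ) < y - x := by linarith
  have h3 := mul_le_mul_of_nonneg_left h2 hyx.le
  have e1 : (y - x) * ((y - s) / (y - x) * Real.log (f x) + (1 - (y - s) / (y - x)) * Real.log (f y))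
      = (y - s) * Real.log (f x) + (s - x) * Real.log (f y) := by field_simp; ring
  rw [e1] at h3
  linarith [h3]

/-- The tangent-line bound for `log f` at `t₀`. -/
lemma logconc_tangent (f : ℝ → ℝ) (hC2 : ContDiffOn ℝ 2 f (Set.Ioi 0))
    (hlc : LogConcaveOnNonneg f) (t₀ : ℝ) (ht₀pos : 0 < t₀) (hft₀ : 0 < f t₀) (m : ℝ)
    (hm : deriv f t₀ = m * f t₀) :
    ∀ t, 0 < t → 0 < f t → Real.log (f t) ≤ Real.log (f t₀) + m * (t - t₀) := by
  set φ : ℝ → ℝ := fun s => Real.log (f s) with hφ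
  have hfd : HasDerivAt f (deriv f t₀) t₀ := by
    have h1 : DifferentiableOn ℝ f (Set.Ioi 0) := hC2.differentiableOn (by norm_num)
    exact (h1.differentiableAt (isOpen_Ioi.mem_nhds ht₀pos)).hasDerivAt
  have hφd : HasDerivAt φ m t₀ := by
    have h := hfd.log hft₀.ne'
    rwa [hm, mul_div_assoc, div_self hft₀.ne', mul_one] at h
  have hslope : Tendsto (slope φ t₀) (𝓝[≠] t₀) (𝓝 m) :=
    hasDerivAt_iff_tendsto_slope.mp hφd
  intro t ht hft
  rcases lt_trichotomy t t₀ with hlt | heq | hgt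
  · have hev : ∀ᶠ s in 𝓝[<] t₀, slope φ t₀ s ≤ slope φ t₀ t := by
      filter_upwards [Ioo_mem_nhdsLT_of_mem (⟨hlt, le_refl t₀⟩ : t₀ ∈ Set.Ioc t t₀)]
      intro s hs
      have h3 := logconc_phi3 f hlc ht.le hft ht₀pos.le hft₀ hs.1 hs.2
      rw [slope_def_field, slope_def_field]
      have e2 : (φ s - φ t₀) / (s - t₀) = (φ t₀ - φ s) / (t₀ - s) := by
        rw [← neg_div_neg_eq]; ring_nf
      have e3 : (φ t - φ t₀) / (t - t₀) = (φ t₀ - φ t) / (t₀ - t) := by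
        rw [← neg_div_neg_eq]; ring_nf
      rw [e2, e3, div_le_div_iff₀ (by linarith [hs.2] : (0:ℝ) < t₀ - s)
        (by linarith : (0:ℝ) < t₀ - t)]
      nlinarith [h3]
    have hm2 : m ≤ slope φ t₀ t := by
      refine le_of_tendsto (hslope.mono_left (nhdsWithin_mono t₀ ?_)) hev
      intro x hx; exact ne_of_lt hx
    rw [slope_def_field, le_div_iff_of_neg (by linarith : t - t₀ < 0)] at hm2
    linarith
  · rw [heq]; simp
  · have hev : ∀ᶠ s in 𝓝[>] t₀, slope φ t₀ t ≤ slope φ t₀ s := by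
      filter_upwards [Ioo_mem_nhdsGT_of_mem (⟨le_refl t₀, hgt⟩ : t₀ ∈ Set.Ico t₀ t)]
      intro s hs
      have h3 := logconc_phi3 f hlc ht₀pos.le hft₀ ht.le hft hs.1 hs.2
      rw [slope_def_field, slope_def_field]
      rw [div_le_div_iff₀ (by linarith : (0:ℝ) < t - t₀) (by linarith [hs.1] : (0:ℝ) < s - t₀)]
      nlinarith [h3]
    have hm2 : slope φ t₀ t ≤ m := by
      refine ge_of_tendsto (hslope.mono_left (nhdsWithin_mono t₀ ?_)) hev
      intro x hx; exact ne_of_gt hx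
    rw [slope_def_field, div_le_iff₀ (by linarith : (0:ℝ) < t - t₀)] at hm2
    linarith

set_option maxHeartbeats 1000000 in
/-- Klartag, Lemma 4.5 (Laplace method): for a continuous log-concave `f` on `[0,∞)`,
`C²`-smooth on `(0,∞)`, with `0 < ∫₀^∞ f < ∞`, the mass of `t^{n−1} f(t)` concentrates in
the interval `[t_n(f)(1−ε), t_n(f)(1+ε)]`. -/
theorem laplace_concentration_around_tn :
    ∃ C c : ℝ, 1 < C ∧ 0 < c ∧ c < 1 ∧
      ∀ (n : ℕ), 2 ≤ n →
        ∀ f : ℝ → ℝ,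
          (∀ t : ℝ, 0 ≤ t → 0 ≤ f t) →
          ContinuousOn f (Set.Ici 0) →
          ContDiffOn ℝ 2 f (Set.Ioi 0) →
          LogConcaveOnNonneg f →
          IntegrableOn f (Set.Ioi 0) →
          0 < ∫ t in Set.Ioi (0 : ℝ), f t →
          ∀ t₀ : ℝ, IsTp n f t₀ →
            ∀ ε : ℝ, 0 ≤ ε → ε ≤ 1 →
              (1 - C * Real.exp (-(c * ε ^ 2 * n))) * ∫ t in Set.Ioi (0 : ℝ), t ^ (n - 1) * f t ≤
                ∫ t in Set.Icc (t₀ * (1 - ε)) (t₀ * (1 + ε)), t ^ (n - 1) * f t := by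
  refine ⟨2, 1/32, one_lt_two, by norm_num, by norm_num, ?_⟩
  intro n hn f hf0 hcont hC2 hlc hint hpos t₀ ht₀ ε hε0 hε1
  obtain ⟨ht₀pos, hft₀, hder⟩ := ht₀
  set g : ℝ → ℝ := fun t => t ^ (n - 1) * f t with hgdef
  set a : ℝ := t₀ * (1 - ε) with hadef
  set T : ℝ := t₀ * (1 + ε) with hTdef
  have hg0 : ∀ t : ℝ, 0 ≤ t → 0 ≤ g t := fun t ht =>
    mul_nonneg (pow_nonneg ht _) (hf0 t ht)
  have ha0 : 0 ≤ a := by rw [hadef]; nlinarith only [ht₀pos, hε1, mul_nonneg ht₀pos.le (by linarith only [hε1] : (0:ℝ) ≤ 1 - ε)]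
  have haT : a ≤ T := by rw [hadef, hTdef]; nlinarith only [mul_le_mul_of_nonneg_left (by linarith only [hε0] : (1:ℝ) - ε ≤ 1 + ε) ht₀pos.le]
  have hat₀ : a ≤ t₀ := by rw [hadef]; nlinarith only [mul_le_mul_of_nonneg_left (by linarith only [hε0] : (1:ℝ) - ε ≤ 1) ht₀pos.le]
  have ht₀T : t₀ ≤ T := by rw [hTdef]; nlinarith only [mul_le_mul_of_nonneg_left (by linarith only [hε0] : (1:ℝ) ≤ 1 + ε) ht₀pos.le]
  clear_value g a T
  have hTotnn : 0 ≤ ∫ t in Ioi (0:ℝ), g t :=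
    setIntegral_nonneg measurableSet_Ioi (fun t ht => hg0 t (le_of_lt ht))
  have hInnn : 0 ≤ ∫ t in Icc a T, g t :=
    setIntegral_nonneg measurableSet_Icc (fun t ht => hg0 t (le_trans ha0 ht.1))
  rcases le_or_gt 1 (2 * Real.exp (-(1/32 * ε ^ 2 * (n:ℕ)))) with hcase | hcase
  · calc (1 - 2 * Real.exp (-(1/32 * ε ^ 2 * (n:ℕ)))) * ∫ t in Ioi (0:ℝ), g t
        ≤ 0 := mul_nonpos_of_nonpos_of_nonneg (by linarith only [hcase]) hTotnn
      _ ≤ _ := hInnn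
  · have hε : 0 < ε := by
      rcases eq_or_lt_of_le hε0 with h | h
      · exfalso; rw [← h] at hcase; norm_num at hcase
      · exact h
    have hεt₀ : 0 < ε * t₀ := mul_pos hε ht₀pos
    set γ : ℝ := Real.exp (-(1/32 * ε ^ 2 * (n:ℕ))) with hγdef
    clear_value γ
    have hγ0 : 0 < γ := by rw [hγdef]; exact Real.exp_pos _
    have hγhalf : γ < 1/2 := by linarith only [hcase]
    set N : ℝ := (n : ℝ) - 1 with hNdef
    clear_value N
    have hn1 : 1 ≤ n := by omega
    have hNcast : ((n - 1 : ℕ) : ℝ) = N := by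
      rw [hNdef, Nat.cast_sub hn1, Nat.cast_one]
    have hn2 : (2:ℝ) ≤ (n:ℝ) := by exact_mod_cast hn
    have hN1 : 1 ≤ N := by rw [hNdef]; linarith only [hn2]
    have hN0 : 0 ≤ N := by linarith only [hN1]
    have hnpos : (0:ℝ) < (n:ℝ) := by linarith only [hn2]
    have hNn : (n:ℝ) ≤ 2 * N := by rw [hNdef]; linarith only [hn2]
    have hne2 : (0:ℝ) < (n:ℝ) * ε ^ 2 / 16 :=
      div_pos (mul_pos hnpos (pow_pos hε 2)) (by norm_num)
    set m : ℝ := -(N / t₀) with hmdef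
    clear_value m
    have hm : deriv f t₀ = m * f t₀ := by
      have hdopen : derivWithin f (Ioi 0) t₀ = deriv f t₀ :=
        derivWithin_of_isOpen isOpen_Ioi ht₀pos
      rw [hdopen] at hder
      rw [div_eq_iff hft₀.ne'] at hder
      rw [hder, hmdef, hNdef]; ring
    have htangent := logconc_tangent f hC2 hlc t₀ ht₀pos hft₀ m hm
    set Hf : ℝ → ℝ := fun t => N * Real.log t + Real.log (f t) with hHfdef
    clear_value Hf
    have hexpH : 0 < Real.exp (Hf t₀) := Real.exp_pos _
    have hgH : ∀ t : ℝ, 0 < t → 0 < f t → g t = Real.exp (Hf t) := by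
      intro t ht hft
      have h1 : Real.exp (N * Real.log t) = t ^ (n - 1 : ℕ) := by
        rw [← hNcast, mul_comm, ← Real.rpow_def_of_pos ht, Real.rpow_natCast]
      simp only [hHfdef]
      rw [Real.exp_add, h1, Real.exp_log hft, hgdef]
    have hHf3 : ∀ x y s : ℝ, 0 < x → 0 < f x → 0 < y → 0 < f y → x < s → s < y →
        (y - s) * Hf x + (s - x) * Hf y ≤ (y - x) * Hf s := by
      intro x y s hx hfx hy hfy hxs hsy
      have h1 := logconc_phi3 f hlc hx.le hfx hy.le hfy hxs hsy
      have h2 := log_concave3 hx hy hxs hsy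
      have h3 := mul_le_mul_of_nonneg_left h2 hN0
      simp only [hHfdef]
      linarith only [h1, h3]
    have hgbound : ∀ t : ℝ, 0 < t →
        g t ≤ (f t₀ * Real.exp N) * (t ^ (N:ℝ) * Real.exp (-(N/t₀) * t ^ (1:ℝ))) := by
      intro t ht
      rcases lt_or_ge 0 (f t) with hft | hft
      · have h1 := htangent t ht hft
        have h2 : f t ≤ f t₀ * Real.exp (m * (t - t₀)) := by
          have h2' := Real.exp_le_exp.2 h1
          rwa [Real.exp_add, Real.exp_log hft, Real.exp_log hft₀] at h2'
        have h3 : t ^ (n - 1 : ℕ) = t ^ (N:ℝ) := by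
          rw [← hNcast, Real.rpow_natCast]
        have h4 : (0:ℝ) ≤ t ^ (n - 1 : ℕ) := pow_nonneg ht.le _
        calc g t = t ^ (n - 1 : ℕ) * f t := by rw [hgdef]
          _ ≤ t ^ (n - 1 : ℕ) * (f t₀ * Real.exp (m * (t - t₀))) :=
              mul_le_mul_of_nonneg_left h2 h4
          _ = (f t₀ * Real.exp N) * (t ^ (N:ℝ) * Real.exp (-(N/t₀) * t ^ (1:ℝ))) := by
              have harg : m * (t - t₀) = N + -(N / t₀) * t := by
                rw [hmdef]; field_simp; ring
              rw [h3, Real.rpow_one, harg, Real.exp_add]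
              ring
      · have hft0 : f t = 0 := le_antisymm hft (hf0 t ht.le)
        have hz : g t = 0 := by rw [hgdef]; simp [hft0]
        rw [hz]; positivity
    have hgcont : ContinuousOn g (Ici (0:ℝ)) := by
      rw [hgdef]
      exact (continuous_pow _).continuousOn.mul hcont
    have hgint : IntegrableOn g (Ioi (0:ℝ)) := by
      have hbase : IntegrableOn (fun t : ℝ => t ^ (N:ℝ) * Real.exp (-(N/t₀) * t ^ (1:ℝ)))
          (Ioi (0:ℝ)) :=
        integrableOn_rpow_mul_exp_neg_mul_rpow (by linarith only [hN1]) (by norm_num) (by positivity)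
      refine Integrable.mono (hbase.const_mul (f t₀ * Real.exp N)) ?_ ?_
      · exact ((hgcont.mono (Ioi_subset_Ici le_rfl)).aestronglyMeasurable measurableSet_Ioi)
      · filter_upwards [self_mem_ae_restrict measurableSet_Ioi]
        intro t ht
        rw [Real.norm_of_nonneg (hg0 t (le_of_lt ht))]
        exact (hgbound t ht).trans (le_abs_self _)
    set L : ℝ := ∫ t in Ioc (0:ℝ) a, g t with hLdef
    set Bl : ℝ := ∫ t in Ioc a t₀, g t with hBldef
    set Br : ℝ := ∫ t in Ioc t₀ T, g t with hBrdef
    set R : ℝ := ∫ t in Ioi T, g t with hRdef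
    clear_value L Bl Br R
    have hTpos : 0 < T := lt_of_lt_of_le ht₀pos ht₀T
    have ht₀Tlt : t₀ < T := by rw [hTdef]; nlinarith only [mul_pos ht₀pos hε]
    have hintL : IntegrableOn g (Ioc (0:ℝ) a) := hgint.mono_set Ioc_subset_Ioi_self
    have hintBl : IntegrableOn g (Ioc a t₀) := hgint.mono_set
      (subset_trans Ioc_subset_Ioi_self (Ioi_subset_Ioi ha0))
    have hintBr : IntegrableOn g (Ioc t₀ T) := hgint.mono_set
      (subset_trans Ioc_subset_Ioi_self (Ioi_subset_Ioi ht₀pos.le))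
    have hintR : IntegrableOn g (Ioi T) := hgint.mono_set (Ioi_subset_Ioi hTpos.le)
    have hL0 : 0 ≤ L := by
      rw [hLdef]
      exact setIntegral_nonneg measurableSet_Ioc (fun t ht => hg0 t ht.1.le)
    have hBl0 : 0 ≤ Bl := by
      rw [hBldef]
      exact setIntegral_nonneg measurableSet_Ioc (fun t ht => hg0 t (le_trans ha0 ht.1.le))
    have hBr0 : 0 ≤ Br := by
      rw [hBrdef]
      exact setIntegral_nonneg measurableSet_Ioc
        (fun t ht => hg0 t (le_trans ht₀pos.le ht.1.le))
    have hR0 : 0 ≤ R := by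
      rw [hRdef]
      exact setIntegral_nonneg measurableSet_Ioi
        (fun t ht => hg0 t (le_trans hTpos.le (le_of_lt ht)))
    have hdisj : ∀ x y : ℝ, Disjoint (Ioc x y) (Ioi y) := by
      intro x y
      rw [Set.disjoint_left]
      rintro z ⟨_, hz2⟩ hz3
      exact absurd hz3 (not_lt.2 hz2)
    have hsplit3 : ∫ t in Ioi t₀, g t = Br + R := by
      rw [← Ioc_union_Ioi_eq_Ioi ht₀T, setIntegral_union (hdisj t₀ T) measurableSet_Ioi
        hintBr hintR, hBrdef, hRdef]
    have hsplit2 : ∫ t in Ioi a, g t = Bl + (Br + R) := by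
      rw [← Ioc_union_Ioi_eq_Ioi hat₀, setIntegral_union (hdisj a t₀) measurableSet_Ioi
        hintBl (hgint.mono_set (Ioi_subset_Ioi ht₀pos.le)), hsplit3, hBldef]
    have hsplit1 : ∫ t in Ioi (0:ℝ), g t = L + (Bl + (Br + R)) := by
      rw [← Ioc_union_Ioi_eq_Ioi ha0, setIntegral_union (hdisj 0 a) measurableSet_Ioi
        hintL (hgint.mono_set (Ioi_subset_Ioi ha0)), hsplit2, hLdef]
    have hdisj2 : Disjoint (Ioc a t₀) (Ioc t₀ T) :=
      (hdisj a t₀).mono_right Ioc_subset_Ioi_self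
    have hsplitM : ∫ t in Icc a T, g t = Bl + Br := by
      rw [integral_Icc_eq_integral_Ioc, ← Ioc_union_Ioc_eq_Ioc hat₀ ht₀T,
        setIntegral_union hdisj2 measurableSet_Ioc hintBl hintBr, hBldef, hBrdef]
    have hγsq : Real.exp (-((n:ℝ) * ε ^ 2 / 16)) = γ ^ 2 := by
      rw [hγdef, ← Real.exp_nat_mul]
      congr 1
      push_cast
      ring
    -- RIGHT tail
    have hRight : R ≤ 2 * γ * Br := by
      by_cases hfT : 0 < f T
      · set Λ : ℝ := Hf t₀ - Hf T with hΛdef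
        clear_value Λ
        have hlogT : Real.log T = Real.log t₀ + Real.log (1 + ε) := by
          rw [hTdef, Real.log_mul ht₀pos.ne' (ne_of_gt (by linarith only [hε0] : (0:ℝ) < 1 + ε))]
        have hmT : m * (T - t₀) = -(N * ε) := by
          rw [hmdef, hTdef]; field_simp; ring
        have hφT : Real.log (f T) ≤ Real.log (f t₀) - N * ε := by
          have h := htangent T hTpos hfT
          rw [hmT] at h; linarith only [h]
        have hlog1 : Real.log (1 + ε) ≤ ε - ε ^ 2 / 8 := aux_log_one_add_le hε0 hε1
        have hΛ2 : (n:ℝ) * ε ^ 2 / 16 ≤ Λ := by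
          have h5 : N * (ε - Real.log (1 + ε)) ≤ Λ := by
            rw [hΛdef]
            simp only [hHfdef]
            rw [hlogT]
            linarith only [hφT]
          have h6 : N * (ε ^ 2 / 8) ≤ N * (ε - Real.log (1 + ε)) :=
            mul_le_mul_of_nonneg_left (by linarith only [hlog1]) hN0
          have h6b : (n:ℝ) * ε ^ 2 / 16 ≤ N * (ε ^ 2 / 8) := by
            nlinarith only [hNn, sq_nonneg ε]
          linarith only [h5, h6, h6b]
        have hΛpos : 0 < Λ := lt_of_lt_of_le hne2 hΛ2
        set lam : ℝ := Λ / (ε * t₀) with hlamdef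
        clear_value lam
        have hlam : 0 < lam := by rw [hlamdef]; exact div_pos hΛpos hεt₀
        have hTt₀ : T - t₀ = ε * t₀ := by rw [hTdef]; ring
        have hlamT : lam * (T - t₀) = Λ := by
          rw [hTt₀, hlamdef, div_mul_cancel₀ _ hεt₀.ne']
        have hlamε : lam * (ε * t₀) = Λ := by
          rw [hlamdef, div_mul_cancel₀ _ hεt₀.ne']
        have hpt_r : ∀ t ∈ Ioi T, g t ≤ Real.exp (Hf t₀) * Real.exp (-(lam * (t - t₀))) := by
          intro t ht
          have ht' : T < t := ht
          have htpos : 0 < t := lt_trans hTpos ht'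
          rcases lt_or_ge 0 (f t) with hft | hft
          · have h3 := hHf3 t₀ t T ht₀pos hft₀ htpos hft ht₀Tlt ht'
            have h4 : Hf t ≤ Hf t₀ - lam * (t - t₀) := by
              have h7 : Hf T = Hf t₀ - Λ := by rw [hΛdef]; ring
              have hTeq : t - T = (t - t₀) - ε * t₀ := by rw [← hTt₀]; ring
              rw [hTt₀, h7, hTeq] at h3
              have h9 : lam * (t - t₀) * (ε * t₀) = Λ * (t - t₀) := by
                rw [mul_right_comm, hlamε]
              have h8 : Hf t * (ε * t₀) ≤ (Hf t₀ - lam * (t - t₀)) * (ε * t₀) := by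
                linarith only [h3, h9]
              exact le_of_mul_le_mul_right h8 hεt₀
            rw [hgH t htpos hft, ← Real.exp_add]
            exact Real.exp_le_exp.2 (by linarith only [h4])
          · have hft0 : f t = 0 := le_antisymm hft (hf0 t htpos.le)
            have hz : g t = 0 := by rw [hgdef]; simp [hft0]
            rw [hz]; positivity
        have hpt_br : ∀ t ∈ Ioc t₀ T,
            Real.exp (Hf t₀) * Real.exp (-(lam * (t - t₀))) ≤ g t := by
          intro t ht
          have htpos : 0 < t := lt_trans ht₀pos ht.1
          rcases eq_or_lt_of_le ht.2 with hteq | htlt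
          · rw [hteq, hgH T hTpos hfT, ← Real.exp_add]
            apply Real.exp_le_exp.2
            rw [hlamT]
            have h7 : Hf T = Hf t₀ - Λ := by rw [hΛdef]; ring
            rw [h7]; exact le_of_eq (by ring)
          · have hft : 0 < f t := logconc_pos f hlc ht₀pos.le hft₀ hTpos.le hfT ht.1 htlt
            have h3 := hHf3 t₀ T t ht₀pos hft₀ hTpos hfT ht.1 htlt
            have h4 : Hf t₀ - lam * (t - t₀) ≤ Hf t := by
              have h7 : Hf T = Hf t₀ - Λ := by rw [hΛdef]; ring
              have hTeq2 : T - t = ε * t₀ - (t - t₀) := by rw [← hTt₀]; ring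
              rw [hTt₀, h7, hTeq2] at h3
              have h9 : lam * (t - t₀) * (ε * t₀) = Λ * (t - t₀) := by
                rw [mul_right_comm, hlamε]
              have h8 : (Hf t₀ - lam * (t - t₀)) * (ε * t₀) ≤ Hf t * (ε * t₀) := by
                linarith only [h3, h9]
              exact le_of_mul_le_mul_right h8 hεt₀
            rw [hgH t htpos hft, ← Real.exp_add]
            exact Real.exp_le_exp.2 (by linarith only [h4])
        have hR1 : R ≤ Real.exp (Hf t₀) * (Real.exp (-Λ) / lam) := by
          have hmono := setIntegral_mono_on hintR
            ((exp_integrableOn_Ioi lam t₀ T hlam).const_mul (Real.exp (Hf t₀)))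
            measurableSet_Ioi hpt_r
          have heq1 : ∫ t in Ioi T, Real.exp (Hf t₀) * Real.exp (-(lam * (t - t₀)))
              = Real.exp (Hf t₀) * (Real.exp (-Λ) / lam) := by
            rw [integral_const_mul _ _, exp_int_Ioi lam t₀ T hlam, hlamT]
          rw [hRdef]
          exact hmono.trans_eq heq1
        have hBr1 : Real.exp (Hf t₀) * ((1 - Real.exp (-Λ)) / lam) ≤ Br := by
          have hcontE : Continuous fun t : ℝ => Real.exp (Hf t₀) * Real.exp (-(lam * (t - t₀))) :=
            contE1 _ _ _
          have hmono := setIntegral_mono_on (hcontE.integrableOn_Ioc) hintBr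
            measurableSet_Ioc hpt_br
          have heq2 : ∫ t in Ioc t₀ T, Real.exp (Hf t₀) * Real.exp (-(lam * (t - t₀)))
              = Real.exp (Hf t₀) * ((1 - Real.exp (-Λ)) / lam) := by
            rw [integral_const_mul _ _, exp_int_Ioc lam t₀ t₀ T hlam ht₀T, hlamT]
            norm_num
          rw [hBrdef]
          exact heq2 ▸ hmono
        have hexpΛ : Real.exp (-Λ) ≤ γ ^ 2 :=
          hγsq ▸ Real.exp_le_exp.2 (by linarith only [hΛ2])
        have hfinal : Real.exp (-Λ) ≤ 2 * γ * (1 - Real.exp (-Λ)) := by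
          nlinarith only [hexpΛ, hγ0, hγhalf, (Real.exp_pos (-Λ)).le,
            mul_le_mul_of_nonneg_left hexpΛ (by linarith only [hγ0] : (0:ℝ) ≤ 2 * γ),
            mul_pos hγ0 hγ0]
        calc R ≤ Real.exp (Hf t₀) * (Real.exp (-Λ) / lam) := hR1
          _ = (Real.exp (Hf t₀) / lam) * Real.exp (-Λ) := by ring
          _ ≤ (Real.exp (Hf t₀) / lam) * (2 * γ * (1 - Real.exp (-Λ))) :=
              mul_le_mul_of_nonneg_left hfinal (by positivity)
          _ = 2 * γ * (Real.exp (Hf t₀) * ((1 - Real.exp (-Λ)) / lam)) := by ring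
          _ ≤ 2 * γ * Br := mul_le_mul_of_nonneg_left hBr1 (by positivity)
      · have hfT0 : f T = 0 := le_antisymm (not_lt.1 hfT) (hf0 T hTpos.le)
        have hz : EqOn g (fun _ => (0:ℝ)) (Ioi T) := by
          intro t ht
          have htpos : 0 < t := lt_trans hTpos ht
          have hft0 : f t = 0 := by
            by_contra hne
            have hft : 0 < f t := lt_of_le_of_ne (hf0 t htpos.le) (Ne.symm hne)
            have := logconc_pos f hlc ht₀pos.le hft₀ htpos.le hft ht₀Tlt ht
            rw [hfT0] at this
            exact lt_irrefl 0 this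
          show g t = 0
          rw [hgdef]; simp [hft0]
        have hRz : R = 0 := by
          rw [hRdef, setIntegral_congr_fun measurableSet_Ioi hz]
          simp
        rw [hRz]
        positivity
    -- LEFT tail
    have hLeft : L ≤ 2 * γ * Bl := by
      rcases eq_or_lt_of_le hε1 with hε1' | hε1'
      · have ha' : a = 0 := by rw [hadef, ← hε1']; ring
        have hLz : L = 0 := by rw [hLdef, ha']; simp
        rw [hLz]; positivity
      · have hapos : 0 < a := by rw [hadef]; nlinarith only [mul_pos ht₀pos (by linarith only [hε1'] : (0:ℝ) < 1 - ε)]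
        have hat₀lt : a < t₀ := by rw [hadef]; nlinarith only [mul_pos ht₀pos hε]
        by_cases hfa : 0 < f a
        · set Λl : ℝ := Hf t₀ - Hf a with hΛldef
          clear_value Λl
          have hloga : Real.log a = Real.log t₀ + Real.log (1 - ε) := by
            rw [hadef, Real.log_mul ht₀pos.ne' (ne_of_gt (by linarith only [hε1'] : (0:ℝ) < 1 - ε))]
          have hma : m * (a - t₀) = N * ε := by
            rw [hmdef, hadef]; field_simp; ring
          have hφa : Real.log (f a) ≤ Real.log (f t₀) + N * ε := by
            have h := htangent a hapos hfa
            rw [hma] at h; linarith only [h]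
          have hlog1 : Real.log (1 - ε) ≤ -ε - ε ^ 2 / 4 := aux_log_one_sub_le hε0 hε1'
          have hΛl2 : (n:ℝ) * ε ^ 2 / 16 ≤ Λl := by
            have h5 : N * (-Real.log (1 - ε) - ε) ≤ Λl := by
              rw [hΛldef]
              simp only [hHfdef]
              rw [hloga]
              linarith only [hφa]
            have h6 : N * (ε ^ 2 / 4) ≤ N * (-Real.log (1 - ε) - ε) :=
              mul_le_mul_of_nonneg_left (by linarith only [hlog1]) hN0
            have h6b : (n:ℝ) * ε ^ 2 / 16 ≤ N * (ε ^ 2 / 4) := by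
              nlinarith only [hNn, sq_nonneg ε]
            linarith only [h5, h6, h6b]
          have hΛlpos : 0 < Λl := lt_of_lt_of_le hne2 hΛl2
          set mu : ℝ := Λl / (ε * t₀) with hmudef
          clear_value mu
          have hmu : 0 < mu := by rw [hmudef]; exact div_pos hΛlpos hεt₀
          have ht₀a : t₀ - a = ε * t₀ := by rw [hadef]; ring
          have hmua : mu * (t₀ - a) = Λl := by
            rw [ht₀a, hmudef, div_mul_cancel₀ _ hεt₀.ne']
          have hmuε : mu * (ε * t₀) = Λl := by
            rw [hmudef, div_mul_cancel₀ _ hεt₀.ne']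
          have hpt_l : ∀ t ∈ Ioc (0:ℝ) a,
              g t ≤ Real.exp (Hf t₀) * Real.exp (-(mu * (t₀ - t))) := by
            intro t ht
            have htpos : 0 < t := ht.1
            rcases eq_or_lt_of_le ht.2 with hteq | htlt
            · rw [hteq, hgH a hapos hfa, ← Real.exp_add]
              apply Real.exp_le_exp.2
              rw [hmua]
              have h7 : Hf a = Hf t₀ - Λl := by rw [hΛldef]; ring
              rw [h7]; exact le_of_eq (by ring)
            · rcases lt_or_ge 0 (f t) with hft | hft
              · have h3 := hHf3 t t₀ a htpos hft ht₀pos hft₀ htlt hat₀lt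
                have h4 : Hf t ≤ Hf t₀ - mu * (t₀ - t) := by
                  have h7 : Hf a = Hf t₀ - Λl := by rw [hΛldef]; ring
                  have haeq : a - t = (t₀ - t) - ε * t₀ := by rw [← ht₀a]; ring
                  rw [ht₀a, h7, haeq] at h3
                  have h9 : mu * (t₀ - t) * (ε * t₀) = Λl * (t₀ - t) := by
                    rw [mul_right_comm, hmuε]
                  have h8 : Hf t * (ε * t₀) ≤ (Hf t₀ - mu * (t₀ - t)) * (ε * t₀) := by
                    linarith only [h3, h9]
                  exact le_of_mul_le_mul_right h8 hεt₀
                rw [hgH t htpos hft, ← Real.exp_add]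
                exact Real.exp_le_exp.2 (by linarith only [h4])
              · have hft0 : f t = 0 := le_antisymm hft (hf0 t htpos.le)
                have hz : g t = 0 := by rw [hgdef]; simp [hft0]
                rw [hz]; positivity
          have hpt_bl : ∀ t ∈ Ioc a t₀,
              Real.exp (Hf t₀) * Real.exp (-(mu * (t₀ - t))) ≤ g t := by
            intro t ht
            have htpos : 0 < t := lt_trans hapos ht.1
            rcases eq_or_lt_of_le ht.2 with hteq | htlt
            · rw [hteq, hgH t₀ ht₀pos hft₀, ← Real.exp_add]
              apply Real.exp_le_exp.2
              simp
            · have hft : 0 < f t := logconc_pos f hlc ha0 hfa ht₀pos.le hft₀ ht.1 htlt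
              have h3 := hHf3 a t₀ t hapos hfa ht₀pos hft₀ ht.1 htlt
              have h4 : Hf t₀ - mu * (t₀ - t) ≤ Hf t := by
                have h7 : Hf a = Hf t₀ - Λl := by rw [hΛldef]; ring
                have hteq3 : t - a = (t - t₀) + ε * t₀ := by rw [← ht₀a]; ring
                rw [ht₀a, h7, hteq3] at h3
                have h9 : mu * (t₀ - t) * (ε * t₀) = Λl * (t₀ - t) := by
                  rw [mul_right_comm, hmuε]
                have h8 : (Hf t₀ - mu * (t₀ - t)) * (ε * t₀) ≤ Hf t * (ε * t₀) := by
                  linarith only [h3, h9]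
                exact le_of_mul_le_mul_right h8 hεt₀
              rw [hgH t htpos hft, ← Real.exp_add]
              exact Real.exp_le_exp.2 (by linarith only [h4])
          have hcontE : Continuous fun t : ℝ => Real.exp (Hf t₀) * Real.exp (-(mu * (t₀ - t))) :=
            contE2 _ _ _
          have hL1 : L ≤ Real.exp (Hf t₀) * (Real.exp (-Λl) / mu) := by
            have hmono := setIntegral_mono_on hintL (hcontE.integrableOn_Ioc)
              measurableSet_Ioc hpt_l
            have heq1 : ∫ t in Ioc (0:ℝ) a, Real.exp (Hf t₀) * Real.exp (-(mu * (t₀ - t)))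
                = Real.exp (Hf t₀)
                  * ((Real.exp (-(mu * (t₀ - a))) - Real.exp (-(mu * (t₀ - 0)))) / mu) := by
              rw [integral_const_mul _ _, exp_int_Ioc' mu t₀ 0 a hmu ha0]
            have hle2 : Real.exp (Hf t₀)
                  * ((Real.exp (-(mu * (t₀ - a))) - Real.exp (-(mu * (t₀ - 0)))) / mu)
                ≤ Real.exp (Hf t₀) * (Real.exp (-Λl) / mu) := by
              rw [hmua]
              apply mul_le_mul_of_nonneg_left _ hexpH.le
              apply div_le_div_of_nonneg_right ?_ hmu.le
              linarith only [Real.exp_pos (-(mu * (t₀ - 0)))]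
            rw [hLdef]
            exact (hmono.trans_eq heq1).trans hle2
          have hBl1 : Real.exp (Hf t₀) * ((1 - Real.exp (-Λl)) / mu) ≤ Bl := by
            have hmono := setIntegral_mono_on (hcontE.integrableOn_Ioc) hintBl
              measurableSet_Ioc hpt_bl
            have heq2 : ∫ t in Ioc a t₀, Real.exp (Hf t₀) * Real.exp (-(mu * (t₀ - t)))
                = Real.exp (Hf t₀) * ((1 - Real.exp (-Λl)) / mu) := by
              rw [integral_const_mul _ _, exp_int_Ioc' mu t₀ a t₀ hmu hat₀, hmua]
              norm_num
            rw [hBldef]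
            exact heq2 ▸ hmono
          have hexpΛl : Real.exp (-Λl) ≤ γ ^ 2 :=
            hγsq ▸ Real.exp_le_exp.2 (by linarith only [hΛl2])
          have hfinal : Real.exp (-Λl) ≤ 2 * γ * (1 - Real.exp (-Λl)) := by
            nlinarith only [hexpΛl, hγ0, hγhalf, (Real.exp_pos (-Λl)).le,
              mul_le_mul_of_nonneg_left hexpΛl (by linarith only [hγ0] : (0:ℝ) ≤ 2 * γ),
              mul_pos hγ0 hγ0]
          calc L ≤ Real.exp (Hf t₀) * (Real.exp (-Λl) / mu) := hL1
            _ = (Real.exp (Hf t₀) / mu) * Real.exp (-Λl) := by ring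
            _ ≤ (Real.exp (Hf t₀) / mu) * (2 * γ * (1 - Real.exp (-Λl))) :=
                mul_le_mul_of_nonneg_left hfinal (by positivity)
            _ = 2 * γ * (Real.exp (Hf t₀) * ((1 - Real.exp (-Λl)) / mu)) := by ring
            _ ≤ 2 * γ * Bl := mul_le_mul_of_nonneg_left hBl1 (by positivity)
        · have hfa0 : f a = 0 := le_antisymm (not_lt.1 hfa) (hf0 a ha0)
          have hz : EqOn g (fun _ => (0:ℝ)) (Ioc 0 a) := by
            intro t ht
            have htpos : 0 < t := ht.1
            have hft0 : f t = 0 := by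
              rcases eq_or_lt_of_le ht.2 with hteq | htlt
              · rw [hteq]; exact hfa0
              · by_contra hne
                have hft : 0 < f t := lt_of_le_of_ne (hf0 t htpos.le) (Ne.symm hne)
                have := logconc_pos f hlc htpos.le hft ht₀pos.le hft₀ htlt hat₀lt
                rw [hfa0] at this
                exact lt_irrefl 0 this
            show g t = 0
            rw [hgdef]; simp [hft0]
          have hLz : L = 0 := by
            rw [hLdef, setIntegral_congr_fun measurableSet_Ioc hz]
            simp
          rw [hLz]; positivity
    -- conclusion
    rw [hsplit1, hsplitM]
    nlinarith only [hLeft, hRight, hL0, hBl0, hBr0, hR0, hγ0, hγhalf,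
      mul_nonneg hγ0.le hL0, mul_nonneg hγ0.le hR0,
      mul_nonneg hγ0.le hBl0, mul_nonneg hγ0.le hBr0]
end
end

section
/- Let n ≥ 1 be an integer, let β > 0, and let f: ℝⁿ → [0,∞) be a log-concave function that is the density of a random vector with zero mean and covariance matrix β·Id. Then f(0) ≥ e^{−n} sup_{x ∈ ℝⁿ} f(x) ≥ (c/√β)ⁿ, where 0 < c < 1 is a universal constant. -/
open MeasureTheory Real Set Filter
open scoped ENNReal NNReal RealInnerProductSpace

noncomputable section

/-- A function is log-concave. -/
def LogConcave {E : Type*} [AddCommMonoid E] [Module ℝ E] (f : E → ℝ) : Prop :=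
  ∀ x y : E, ∀ l : ℝ, 0 < l → l < 1 →
    f x ^ l * f y ^ (1 - l) ≤ f (l • x + (1 - l) • y)

/-- A function `f : ℝⁿ → [0, ∞)` is an isotropic density: it is nonnegative, integrates to one,
and is the density of a random vector with zero mean and identity covariance matrix. -/
def IsotropicDensity {n : ℕ} (f : EuclideanSpace ℝ (Fin n) → ℝ) : Prop :=
  (∀ x, 0 ≤ f x) ∧ (∫ x, f x = 1) ∧ (∫ x, f x • x = 0) ∧
    ∀ θ : EuclideanSpace ℝ (Fin n), ∫ x, f x * ⟪x, θ⟫ ^ 2 = ‖θ‖ ^ 2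

/-- The total-variation distance `2 * sup_A |μ(A) - ν(A)|`. -/
def dTV {α : Type*} [MeasurableSpace α] (μ ν : Measure α) : ℝ :=
  2 * ⨆ A : {s : Set α // MeasurableSet s}, |(μ A.1).toReal - (ν A.1).toReal|

open scoped Topology

section Auxiliary

/-- Change of variables `x ↦ a • x + c` for the Lebesgue integral. -/
lemma lint_affine {E : Type*} [NormedAddCommGroup E] [NormedSpace ℝ E] [MeasurableSpace E]
    [BorelSpace E] [FiniteDimensional ℝ E] (μ : Measure E) [μ.IsAddHaarMeasure]
    (g : E → ℝ≥0∞) (hg : AEMeasurable g μ) {a : ℝ} (ha : a ≠ 0) (c : E) :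
    ∫⁻ x, g (a • x + c) ∂μ = ENNReal.ofReal |(a ^ Module.finrank ℝ E)⁻¹| * ∫⁻ x, g x ∂μ := by
  have hT : (fun x : E => a • x + c) = (fun y => y + c) ∘ (fun x => a • x) := rfl
  have hmap : μ.map (fun x : E => a • x + c) =
      ENNReal.ofReal |(a ^ Module.finrank ℝ E)⁻¹| • μ := by
    rw [hT, ← Measure.map_map (measurable_add_const c) (measurable_const_smul a)]
    rw [MeasureTheory.Measure.map_addHaar_smul μ ha]
    rw [Measure.map_smul]
    congr 1
    exact map_add_right_eq_self μ c
  have h1 : ∫⁻ y, g y ∂(μ.map (fun x : E => a • x + c)) = ∫⁻ x, g (a • x + c) ∂μ := by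
    refine lintegral_map' ?_ ?_
    · rw [hmap]; exact hg.mono_ac (Measure.absolutelyContinuous_of_le_smul le_rfl)
    · exact ((measurable_const_smul a).add_const c).aemeasurable
  rw [← h1, hmap, lintegral_smul_measure, smul_eq_mul]

lemma lint_f_one {n : ℕ} {f : EuclideanSpace ℝ (Fin n) → ℝ} (hnn : ∀ x, 0 ≤ f x)
    (hint : Integrable f) (h1 : ∫ x, f x = 1) :
    ∫⁻ x, ENNReal.ofReal (f x) = 1 := by
  rw [← ofReal_integral_eq_lintegral_ofReal hint (Eventually.of_forall hnn), h1,
    ENNReal.ofReal_one]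

/-- Lower bound for the Gamma function: `Γ(n/2 + 1) ≥ (n / (2e)) ^ (n/2)`. -/
lemma gamma_lb : ∀ n : ℕ,
    ((n : ℝ) / (2 * Real.exp 1)) ^ ((n : ℝ) / 2) ≤ Real.Gamma ((n : ℝ) / 2 + 1) := by
  have h2e : (0:ℝ) < 2 * Real.exp 1 := by positivity
  intro n
  induction n using Nat.strong_induction_on with
  | _ n ih =>
    match n with
    | 0 => simp [Real.Gamma_one]
    | 1 =>
      rw [show ((1:ℕ):ℝ)/2 + 1 = 1/2 + 1 by norm_num, Real.Gamma_add_one (by norm_num),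
        Real.Gamma_one_half_eq]
      have h1 : ((1:ℕ):ℝ) / (2 * Real.exp 1) ≤ 1/4 := by
        have := Real.exp_one_gt_d9
        rw [div_le_iff₀ h2e]; nlinarith
      calc (((1:ℕ):ℝ) / (2 * Real.exp 1)) ^ (((1:ℕ):ℝ) / 2)
          ≤ ((1:ℝ)/4) ^ (((1:ℕ):ℝ)/2) := by
            apply Real.rpow_le_rpow (by positivity) h1 (by norm_num)
        _ = 1/2 := by
            rw [show ((1:ℕ):ℝ)/2 = (1:ℝ)/2 by norm_num, ← Real.sqrt_eq_rpow]
            rw [show (1:ℝ)/4 = (1/2)^2 by norm_num, Real.sqrt_sq (by norm_num)]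
        _ ≤ 1/2 * √π := by
            nlinarith [Real.sqrt_le_sqrt (le_of_lt Real.pi_gt_three), Real.sq_sqrt Real.pi_pos.le,
              Real.sqrt_nonneg π,
              Real.sqrt_lt_sqrt (by norm_num : (0:ℝ) ≤ 1)
                (by linarith [Real.pi_gt_three] : (1:ℝ) < π), Real.sqrt_one]
    | (m + 2) =>
      have ihm := ih m (by omega)
      have hpos : ((m:ℝ)/2 + 1) ≠ 0 := by positivity
      push_cast
      rw [show ((m:ℝ)+2) / 2 + 1 = ((m:ℝ)/2 + 1) + 1 by ring, Real.Gamma_add_one hpos]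
      have main : (((m:ℝ)+2) / (2 * Real.exp 1)) ^ (((m:ℝ)+2) / 2)
          ≤ ((m:ℝ)/2 + 1) * (((m:ℝ)) / (2 * Real.exp 1)) ^ ((m:ℝ)/2) := by
        rcases Nat.eq_zero_or_pos m with rfl | hm
        · simp only [Nat.cast_zero, zero_add]
          rw [show ((2:ℝ))/2 = 1 by norm_num, Real.rpow_one]
          rw [show ((0:ℝ))/2 = 0 by norm_num, Real.rpow_zero]
          rw [div_le_iff₀ h2e]
          nlinarith [Real.exp_one_gt_d9]
        · have hmpos : (0:ℝ) < m := by exact_mod_cast hm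
          have e1 : (((m:ℝ)+2) / (2 * Real.exp 1)) ^ (((m:ℝ)+2) / 2)
              = (((m:ℝ)+2) / (2 * Real.exp 1)) ^ ((m:ℝ)/2) * (((m:ℝ)+2) / (2 * Real.exp 1)) := by
            rw [show ((m:ℝ)+2)/2 = (m:ℝ)/2 + 1 by ring, Real.rpow_add (by positivity),
              Real.rpow_one]
          rw [e1]
          have e2 : (((m:ℝ)+2) / (2 * Real.exp 1)) ^ ((m:ℝ)/2)
              = ((m:ℝ) / (2 * Real.exp 1)) ^ ((m:ℝ)/2) * (((m:ℝ)+2)/(m:ℝ)) ^ ((m:ℝ)/2) := by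
            rw [← Real.mul_rpow (by positivity) (by positivity)]
            congr 1
            field_simp
          rw [e2]
          have e3 : (((m:ℝ)+2)/(m:ℝ)) ^ ((m:ℝ)/2) ≤ Real.exp 1 := by
            have h1 : ((m:ℝ)+2)/(m:ℝ) = 1 + 2/(m:ℝ) := by field_simp
            have h2 : (1 + 2/(m:ℝ)) ≤ Real.exp (2/(m:ℝ)) := by
              have := Real.add_one_le_exp (2/(m:ℝ)); linarith
            calc (((m:ℝ)+2)/(m:ℝ)) ^ ((m:ℝ)/2)
                ≤ (Real.exp (2/(m:ℝ))) ^ ((m:ℝ)/2) := by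
                  rw [h1]; exact Real.rpow_le_rpow (by positivity) h2 (by positivity)
              _ = Real.exp (2/(m:ℝ) * ((m:ℝ)/2)) := (Real.exp_mul _ _).symm
              _ = Real.exp 1 := by rw [show 2/(m:ℝ) * ((m:ℝ)/2) = 1 by field_simp]
          have hynn : (0:ℝ) ≤ ((m:ℝ) / (2 * Real.exp 1)) ^ ((m:ℝ)/2) := by positivity
          calc ((m:ℝ) / (2 * Real.exp 1)) ^ ((m:ℝ)/2) * (((m:ℝ)+2)/(m:ℝ)) ^ ((m:ℝ)/2)
                * (((m:ℝ)+2) / (2 * Real.exp 1))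
              ≤ ((m:ℝ) / (2 * Real.exp 1)) ^ ((m:ℝ)/2) * Real.exp 1
                * (((m:ℝ)+2) / (2 * Real.exp 1)) := by
                apply mul_le_mul_of_nonneg_right (mul_le_mul_of_nonneg_left e3 hynn)
                positivity
            _ = ((m:ℝ)/2 + 1) * ((m:ℝ) / (2 * Real.exp 1)) ^ ((m:ℝ)/2) := by
                field_simp
      calc (((m:ℝ)+2) / (2 * Real.exp 1)) ^ (((m:ℝ)+2) / 2)
          ≤ ((m:ℝ)/2 + 1) * (((m:ℝ)) / (2 * Real.exp 1)) ^ ((m:ℝ)/2) := main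
        _ ≤ ((m:ℝ)/2 + 1) * Real.Gamma ((m:ℝ)/2 + 1) := by
            apply mul_le_mul_of_nonneg_left ihm (by positivity)

variable {n : ℕ} {f : EuclideanSpace ℝ (Fin n) → ℝ}

/-- An integrable log-concave function is bounded above. -/
lemma logconcave_bddAbove (hlc : LogConcave f) (hnn : ∀ x, 0 ≤ f x) (hint : Integrable f)
    (h1 : ∫ x, f x = 1) : BddAbove (range f) := by
  by_contra hb
  have hfg : f =ᵐ[volume] hint.1.mk f := hint.1.ae_eq_mk
  set g := hint.1.mk f with hgdef
  have hgmeas : StronglyMeasurable g := hint.1.stronglyMeasurable_mk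
  set A : ℕ → Set (EuclideanSpace ℝ (Fin n)) :=
    fun k => {x | 1/((k:ℝ)+1) ≤ g x} ∩ Metric.ball 0 ((k:ℝ)+1) with hA
  have hAmeas : ∀ k, MeasurableSet (A k) := fun k =>
    (hgmeas.measurable measurableSet_Ici).inter measurableSet_ball
  have hex : ∃ k : ℕ, volume (A k) ≠ 0 := by
    by_contra h
    push_neg at h
    have hU : volume (⋃ k, A k) = 0 := measure_iUnion_null (fun k => (h k))
    have hae : f =ᵐ[volume] 0 := by
      filter_upwards [hfg, measure_eq_zero_iff_ae_notMem.mp hU] with x hx hxU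
      show f x = 0
      by_contra hfx
      have hpos : 0 < f x := lt_of_le_of_ne (hnn x) (Ne.symm hfx)
      obtain ⟨k, hk⟩ := exists_nat_gt (max (1/f x) ‖x‖)
      have h1k : 1/ f x < (k:ℝ) + 1 := lt_trans (lt_of_le_of_lt (le_max_left _ _) hk)
        (by linarith)
      have hfxk : 1/((k:ℝ)+1) < f x := (one_div_lt hpos (by positivity)).mp h1k
      refine hxU (mem_iUnion.mpr ⟨k, ⟨?_, ?_⟩⟩)
      · show 1/((k:ℝ)+1) ≤ g x
        rw [← hx]; exact hfxk.le
      · simp only [Metric.mem_ball, dist_zero_right]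
        exact lt_trans (lt_of_le_of_lt (le_max_right _ _) hk) (by linarith)
    rw [integral_congr_ae hae] at h1
    simp at h1
  obtain ⟨k, hk⟩ := hex
  have hmfin : volume (A k) ≠ ⊤ :=
    ne_of_lt (lt_of_le_of_lt (measure_mono inter_subset_right) measure_ball_lt_top)
  set m := (volume (A k)).toReal with hm
  have hmpos : 0 < m := ENNReal.toReal_pos hk hmfin
  set δ : ℝ := 1/((k:ℝ)+1) with hδdef
  have hδ : 0 < δ := by positivity
  have key : ∀ C : ℝ, 0 < C → Real.sqrt (C * δ) * m ≤ 2^n := by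
    intro C hC
    obtain ⟨y₁, ⟨x₁, rfl⟩, hx₁⟩ := not_bddAbove_iff.mp hb C
    have hfx₁ : 0 < f x₁ := lt_trans hC hx₁
    have hfae : AEMeasurable (fun x => ENNReal.ofReal (f x)) volume :=
      hint.1.aemeasurable.ennreal_ofReal
    have hcv : ∫⁻ y, ENNReal.ofReal (f ((1/2:ℝ) • y + (1/2:ℝ) • x₁))
        = ENNReal.ofReal |(((1/2:ℝ)) ^ Module.finrank ℝ (EuclideanSpace ℝ (Fin n)))⁻¹|
          * ∫⁻ x, ENNReal.ofReal (f x) :=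
      lint_affine volume _ hfae (by norm_num) ((1/2:ℝ) • x₁)
    have hlow : ∀ᵐ y, ENNReal.ofReal (Real.sqrt (C*δ)) * (A k).indicator (fun _ => (1:ℝ≥0∞)) y
        ≤ ENNReal.ofReal (f ((1/2:ℝ) • y + (1/2:ℝ) • x₁)) := by
      filter_upwards [hfg] with y hy
      by_cases hyA : y ∈ A k
      · rw [indicator_of_mem hyA, mul_one]
        apply ENNReal.ofReal_le_ofReal
        have hfy : δ ≤ f y := by rw [hy]; exact hyA.1
        have hlcy := hlc y x₁ (1/2) (by norm_num) (by norm_num)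
        rw [show (1:ℝ) - 1/2 = 1/2 by norm_num] at hlcy
        refine le_trans ?_ hlcy
        rw [← Real.sqrt_eq_rpow, ← Real.sqrt_eq_rpow, ← Real.sqrt_mul (hnn y)]
        apply Real.sqrt_le_sqrt
        nlinarith
      · rw [indicator_of_notMem hyA, mul_zero]; exact zero_le
    have hchain : ENNReal.ofReal (Real.sqrt (C*δ)) * volume (A k) ≤ ENNReal.ofReal (2^n) := by
      calc ENNReal.ofReal (Real.sqrt (C*δ)) * volume (A k)
          = ∫⁻ y, ENNReal.ofReal (Real.sqrt (C*δ)) * (A k).indicator (fun _ => (1:ℝ≥0∞)) y := by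
            rw [lintegral_const_mul' _ _ ENNReal.ofReal_ne_top,
              lintegral_indicator (hAmeas k), setLIntegral_one]
        _ ≤ ∫⁻ y, ENNReal.ofReal (f ((1/2:ℝ) • y + (1/2:ℝ) • x₁)) := lintegral_mono_ae hlow
        _ = ENNReal.ofReal (2^n) := by
            rw [hcv, lint_f_one hnn hint h1, mul_one, finrank_euclideanSpace_fin]
            congr 1
            rw [abs_of_pos (by positivity), one_div, inv_pow, inv_inv]
    have := ENNReal.toReal_mono (by simp) hchain
    rw [ENNReal.toReal_mul, ENNReal.toReal_ofReal (Real.sqrt_nonneg _),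
      ENNReal.toReal_ofReal (by positivity)] at this
    exact this
  have hfinal := key (((2^n / m + 1)/ Real.sqrt δ)^2) (by positivity)
  rw [show ((2^n / m + 1)/ Real.sqrt δ)^2 * δ = ((2^n / m + 1)/ Real.sqrt δ * Real.sqrt δ)^2 by
      rw [mul_pow, Real.sq_sqrt hδ.le], Real.sqrt_sq (by positivity)] at hfinal
  rw [div_mul_cancel₀ _ (ne_of_gt (Real.sqrt_pos.mpr hδ))] at hfinal
  have hcancel : 2^n/m*m = (2:ℝ)^n := div_mul_cancel₀ _ (ne_of_gt hmpos)
  nlinarith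

/-- The support of a log-concave function is convex. -/
lemma support_convex (hlc : LogConcave f) :
    Convex ℝ {x | 0 < f x} := by
  intro x hx y hy a b ha hb hab
  rcases eq_or_lt_of_le ha with rfl | ha'
  · simp only [zero_add] at hab; subst hab; simpa using hy
  rcases eq_or_lt_of_le hb with rfl | hb'
  · simp only [add_zero] at hab; subst hab; simpa using hx
  have hb1 : b = 1 - a := by linarith
  have ha1 : a < 1 := by linarith
  have := hlc x y a ha' ha1
  have hpos : 0 < f x ^ a * f y ^ (1 - a) :=
    mul_pos (Real.rpow_pos_of_pos hx _) (Real.rpow_pos_of_pos hy _)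
  subst hb1
  exact lt_of_lt_of_le hpos this

/-- The origin (the barycenter) lies in the interior of the support. -/
lemma zero_mem_interior_support {β : ℝ} (hβ : 0 < β)
    (hlc : LogConcave f) (hnn : ∀ x, 0 ≤ f x)
    (h1 : ∫ x, f x = 1)
    (hmean_int : Integrable (fun x => f x • x))
    (hmean : ∫ x, f x • x = 0)
    (hcov : ∀ θ : EuclideanSpace ℝ (Fin n), ∫ x, f x * ⟪x, θ⟫ ^ 2 = β * ‖θ‖ ^ 2) :
    (0 : EuclideanSpace ℝ (Fin n)) ∈ interior {x | 0 < f x} := by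
  set S := {x | 0 < f x} with hSdef
  have hSconv : Convex ℝ S := support_convex hlc
  have hSne : (interior S).Nonempty := by
    by_contra h
    rw [not_nonempty_iff_eq_empty, ← not_nonempty_iff_eq_empty] at h
    have hspan : affineSpan ℝ S ≠ ⊤ := by
      intro htop
      exact h (hSconv.interior_nonempty_iff_affineSpan_eq_top.mpr htop)
    have hnull :
        volume ((affineSpan ℝ S : AffineSubspace ℝ _) : Set (EuclideanSpace ℝ (Fin n))) = 0 :=
      Measure.addHaar_affineSubspace _ _ hspan
    have hae : f =ᵐ[volume] 0 := by
      filter_upwards [measure_eq_zero_iff_ae_notMem.mp hnull] with x hx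
      show f x = 0
      by_contra hfx
      exact hx (subset_affineSpan ℝ S (lt_of_le_of_ne (hnn x) (Ne.symm hfx) : 0 < f x))
    rw [integral_congr_ae hae] at h1
    simp at h1
  by_contra h0
  obtain ⟨L, hL⟩ := geometric_hahn_banach_open_point hSconv.interior isOpen_interior h0
  have hL0 : L 0 = 0 := map_zero L
  obtain ⟨y₀, hy₀⟩ := hSne
  have hLy₀ : L y₀ < 0 := by have := hL y₀ hy₀; rwa [hL0] at this
  have hLS : ∀ x ∈ S, L x ≤ 0 := by
    intro x hx
    by_contra hpos
    push_neg at hpos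
    set t : ℝ := L x / (2 * (L x - L y₀)) with ht
    have hden : 0 < L x - L y₀ := by linarith
    have ht0 : 0 < t := by positivity
    have ht1 : 1 - t + t = 1 := by ring
    have htlt : t < 1 := by
      rw [div_lt_one (by linarith)]; linarith
    have hmem := hSconv.combo_closure_interior_mem_interior (subset_closure hx) hy₀
      (by linarith : (0:ℝ) ≤ 1 - t) ht0 ht1
    have := hL _ hmem
    rw [map_add, L.map_smul, L.map_smul, hL0, smul_eq_mul, smul_eq_mul] at this
    have ht2 : t * (L x - L y₀) = L x / 2 := by
      rw [ht]; field_simp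
    have hval : (1 - t) * L x + t * L y₀ = L x / 2 := by linear_combination (-1 : ℝ) * ht2
    rw [hval] at this
    linarith
  set θ : EuclideanSpace ℝ (Fin n) :=
    (InnerProductSpace.toDual ℝ (EuclideanSpace ℝ (Fin n))).symm L with hθdef
  have hθ : ∀ x, ⟪θ, x⟫ = L x := fun x => InnerProductSpace.toDual_symm_apply
  have hθne : θ ≠ 0 := by
    intro hz
    rw [← hθ y₀, hz, inner_zero_left] at hLy₀
    exact lt_irrefl _ hLy₀
  have hnonpos : ∀ x, 0 ≤ -(f x * ⟪x, θ⟫) := by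
    intro x
    rcases eq_or_lt_of_le (hnn x) with hfx | hfx
    · rw [← hfx]; simp
    · have hx : x ∈ S := hfx
      have : ⟪x, θ⟫ ≤ 0 := by rw [real_inner_comm, hθ]; exact hLS x hx
      simp only [neg_nonneg]
      exact mul_nonpos_of_nonneg_of_nonpos (hnn x) this
  have hint_comp : Integrable (fun x => f x * ⟪x, θ⟫) := by
    have := L.integrable_comp hmean_int
    apply this.congr
    filter_upwards with x
    rw [L.map_smul, smul_eq_mul, ← hθ, real_inner_comm]
  have hint_eq : ∫ x, f x * ⟪x, θ⟫ = 0 := by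
    have hcomm := L.integral_comp_comm hmean_int
    rw [hmean, map_zero] at hcomm
    rw [← hcomm]
    congr 1
    funext x
    rw [L.map_smul, smul_eq_mul, ← hθ, real_inner_comm]
  have hae : (fun x => -(f x * ⟪x, θ⟫)) =ᵐ[volume] 0 := by
    rw [← integral_eq_zero_iff_of_nonneg hnonpos hint_comp.neg]
    rw [integral_neg, hint_eq, neg_zero]
  have hcov0 : ∫ x, f x * ⟪x, θ⟫ ^ 2 = 0 := by
    have : (fun x => f x * ⟪x, θ⟫ ^ 2) =ᵐ[volume] 0 := by
      filter_upwards [hae] with x hx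
      have hx' : f x * ⟪x, θ⟫ = 0 := by
        have : -(f x * ⟪x, θ⟫) = 0 := hx
        linarith
      show f x * ⟪x, θ⟫ ^ 2 = 0
      rw [pow_two, ← mul_assoc, hx', zero_mul]
    rw [integral_congr_ae this]
    simp
  rw [hcov θ] at hcov0
  have : (0:ℝ) < ‖θ‖ ^ 2 := by
    have := norm_pos_iff.mpr hθne
    positivity
  nlinarith

set_option maxHeartbeats 1000000 in
/-- Jensen-type inequality via a supporting hyperplane at the barycenter. -/
lemma jensen_lower {M : ℝ} (hM : 0 < M)
    (hlc : LogConcave f) (hnn : ∀ x, 0 ≤ f x) (hint : Integrable f)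
    (h1 : ∫ x, f x = 1)
    (hmean_int : Integrable (fun x => f x • x))
    (hmean : ∫ x, f x • x = 0)
    (h0U : (0 : EuclideanSpace ℝ (Fin n)) ∈ interior {x | 0 < f x})
    (hhint : Integrable (fun x => f x * Real.log (M / f x))) :
    Real.log (M / f 0) ≤ ∫ x, f x * Real.log (M / f x) := by
  set S := {x | 0 < f x} with hSdef
  have hSconv : Convex ℝ S := support_convex hlc
  set U := interior S with hUdef
  set ψ : EuclideanSpace ℝ (Fin n) → ℝ := fun x => Real.log (M / f x) with hψdef
  have hfU : ∀ x ∈ U, 0 < f x := fun x hx => (interior_subset hx : x ∈ S)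
  have hf0 : 0 < f 0 := hfU 0 h0U
  have hψconv : ConvexOn ℝ U ψ := by
    refine ⟨hSconv.interior, ?_⟩
    intro x hx y hy a b ha hb hab
    rcases eq_or_lt_of_le ha with rfl | ha'
    · simp only [zero_add] at hab; subst hab; simp
    rcases eq_or_lt_of_le hb with rfl | hb'
    · simp only [add_zero] at hab; subst hab; simp
    have hb1 : b = 1 - a := by linarith
    have ha1 : a < 1 := by linarith
    have hfx := hfU x hx
    have hfy := hfU y hy
    have hkey := hlc x y a ha' ha1
    have hfz : 0 < f (a • x + (1 - a) • y) :=
      lt_of_lt_of_le (mul_pos (Real.rpow_pos_of_pos hfx _) (Real.rpow_pos_of_pos hfy _)) hkey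
    subst hb1
    show Real.log (M / f (a • x + (1-a) • y)) ≤ a * Real.log (M / f x) + (1-a) * Real.log (M / f y)
    rw [Real.log_div (ne_of_gt hM) (ne_of_gt hfz), Real.log_div (ne_of_gt hM) (ne_of_gt hfx),
      Real.log_div (ne_of_gt hM) (ne_of_gt hfy)]
    have hlog : a * Real.log (f x) + (1-a) * Real.log (f y)
        ≤ Real.log (f (a • x + (1-a) • y)) := by
      calc a * Real.log (f x) + (1-a) * Real.log (f y)
          = Real.log (f x ^ a * f y ^ (1-a)) := by
            rw [Real.log_mul (ne_of_gt (Real.rpow_pos_of_pos hfx _))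
              (ne_of_gt (Real.rpow_pos_of_pos hfy _)), Real.log_rpow hfx, Real.log_rpow hfy]
        _ ≤ Real.log (f (a • x + (1-a) • y)) :=
            Real.log_le_log (mul_pos (Real.rpow_pos_of_pos hfx _)
              (Real.rpow_pos_of_pos hfy _)) hkey
    nlinarith [hlog]
  have hψcont : ContinuousOn ψ U := hψconv.continuousOn isOpen_interior
  set T : Set (EuclideanSpace ℝ (Fin n) × ℝ) :=
    (U ×ˢ univ) ∩ (fun p => p.2 - ψ p.1) ⁻¹' (Ioi 0) with hTdef
  have hTopen : IsOpen T := by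
    apply ContinuousOn.isOpen_inter_preimage ?_ (isOpen_interior.prod isOpen_univ) isOpen_Ioi
    exact continuous_snd.continuousOn.sub
      (hψcont.comp continuous_fst.continuousOn (fun p hp => hp.1))
  have hTconv : Convex ℝ T := by
    rintro p ⟨⟨hp1, -⟩, hp2⟩ q ⟨⟨hq1, -⟩, hq2⟩ a b ha hb hab
    simp only [mem_preimage, mem_Ioi, sub_pos] at hp2 hq2
    constructor
    · exact ⟨hSconv.interior hp1 hq1 ha hb hab, trivial⟩
    · simp only [mem_preimage, mem_Ioi, sub_pos]
      have h2 : (a • p + b • q).2 = a * p.2 + b * q.2 := rfl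
      have h1' : (a • p + b • q).1 = a • p.1 + b • q.1 := rfl
      rw [h2, h1']
      have hψle := hψconv.2 hp1 hq1 ha hb hab
      have : a * ψ p.1 + b * ψ q.1 < a * p.2 + b * q.2 := by
        rcases eq_or_lt_of_le ha with rfl | ha'
        · simp only [zero_add] at hab; subst hab; simpa using hq2
        · have := mul_lt_mul_of_pos_left hp2 ha'
          have h2q := mul_le_mul_of_nonneg_left hq2.le hb
          linarith
      calc ψ (a • p.1 + b • q.1) ≤ a * ψ p.1 + b * ψ q.1 := by
            simpa [smul_eq_mul] using hψle
        _ < a * p.2 + b * q.2 := this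
  have hT0 : ((0 : EuclideanSpace ℝ (Fin n)), ψ 0) ∉ T := by
    rintro ⟨-, h2⟩
    simp only [mem_preimage, mem_Ioi, sub_pos] at h2
    exact lt_irrefl _ h2
  obtain ⟨L, hL⟩ := geometric_hahn_banach_open_point hTconv hTopen hT0
  set b : ℝ := L (0, 1) with hbdef
  set aL : EuclideanSpace ℝ (Fin n) →L[ℝ] ℝ := L.comp (ContinuousLinearMap.inl ℝ _ ℝ) with haLdef
  have hsplit : ∀ (x : EuclideanSpace ℝ (Fin n)) (t : ℝ), L (x, t) = aL x + t * b := by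
    intro x t
    have : (x, t) = (x, (0:ℝ)) + t • ((0 : EuclideanSpace ℝ (Fin n)), (1:ℝ)) := by
      simp [Prod.ext_iff]
    rw [this, map_add, L.map_smul, smul_eq_mul]
    rfl
  have ha0 : aL 0 = 0 := map_zero aL
  have hLval : L (0, ψ 0) = ψ 0 * b := by rw [hsplit, ha0, zero_add]
  have hbneg : b < 0 := by
    have hmem : ((0 : EuclideanSpace ℝ (Fin n)), ψ 0 + 1) ∈ T := by
      refine ⟨⟨h0U, trivial⟩, ?_⟩
      simp only [mem_preimage, mem_Ioi, sub_pos]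
      linarith
    have := hL _ hmem
    rw [hsplit, hLval, ha0, zero_add] at this
    nlinarith
  have hgrad : ∀ x ∈ U, ψ 0 - aL x / b ≤ ψ x := by
    intro x hx
    have hδ : ∀ δ : ℝ, 0 < δ → aL x + (ψ x + δ) * b < ψ 0 * b := by
      intro δ hδp
      have hmem : (x, ψ x + δ) ∈ T := ⟨⟨hx, trivial⟩, by
        simp only [mem_preimage, mem_Ioi, sub_pos]; linarith⟩
      have := hL _ hmem
      rwa [hsplit, hLval] at this
    have hle : aL x + ψ x * b ≤ ψ 0 * b := by
      by_contra hlt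
      push_neg at hlt
      have hd : 0 < (aL x + ψ x * b - ψ 0 * b) / (-b) := by
        apply div_pos (by linarith) (by linarith)
      have := hδ _ hd
      have hbne : b ≠ 0 := ne_of_lt hbneg
      have hdivb : b / (-b) = -1 := by rw [div_neg, div_self hbne]
      have hexp : (aL x + ψ x * b - ψ 0 * b) / (-b) * b = -(aL x + ψ x * b - ψ 0 * b) := by
        rw [div_mul_eq_mul_div, mul_div_assoc, hdivb, mul_neg_one]
      nlinarith [hexp]
    rw [sub_le_iff_le_add]
    have : (ψ 0 * b - aL x) / b ≤ ψ x := by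
      rw [div_le_iff_of_neg hbneg]
      linarith
    have hbne : b ≠ 0 := ne_of_lt hbneg
    have hexp2 : (ψ 0 * b - aL x) / b = ψ 0 - aL x / b := by
      rw [sub_div, mul_div_cancel_right₀ _ hbne]
    rw [hexp2] at this
    linarith
  have hfront : volume (frontier S) = 0 := hSconv.addHaar_frontier volume
  have haelow : ∀ᵐ x, f x * ψ 0 - f x * (aL x / b) ≤ f x * ψ x := by
    filter_upwards [measure_eq_zero_iff_ae_notMem.mp hfront] with x hx
    by_cases hxS : 0 < f x
    · have hxU : x ∈ U := by
        have hxcl : x ∈ closure S := subset_closure hxS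
        by_contra hxI
        exact hx ⟨hxcl, hxI⟩
      have := hgrad x hxU
      have hmul := mul_le_mul_of_nonneg_left this (hnn x)
      rw [mul_sub] at hmul
      exact hmul
    · have hfx : f x = 0 := le_antisymm (not_lt.mp hxS) (hnn x)
      simp [hfx]
  have hFint : Integrable (fun x => aL (f x • x)) := aL.integrable_comp hmean_int
  have hmulrep : (fun x => f x * (aL x / b)) = fun x => aL (f x • x) / b := by
    funext x
    rw [aL.map_smul, smul_eq_mul]
    ring
  have hRHSint : Integrable (fun x => f x * (aL x / b)) := by
    rw [hmulrep]
    exact hFint.div_const b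
  have hLHSint : Integrable (fun x => f x * ψ 0 - f x * (aL x / b)) :=
    (hint.mul_const _).sub hRHSint
  have hmono := integral_mono_ae hLHSint hhint haelow
  have hcalc : ∫ x, (f x * ψ 0 - f x * (aL x / b)) = ψ 0 := by
    rw [integral_sub (hint.mul_const _) hRHSint]
    have e1 : ∫ x, f x * ψ 0 = ψ 0 := by
      rw [integral_mul_const, h1, one_mul]
    have e2 : ∫ x, f x * (aL x / b) = 0 := by
      rw [hmulrep, integral_div, aL.integral_comp_comm hmean_int, hmean, map_zero, zero_div]
    rw [e1, e2, sub_zero]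
  rw [hcalc] at hmono
  exact hmono

/-- Entropy bound: `∫ f log(M/f) ≤ n` for a log-concave density with sup `M`. -/
lemma entropy_le {M : ℝ} (hM : 0 < M)
    (hlc : LogConcave f) (hnn : ∀ x, 0 ≤ f x) (hint : Integrable f)
    (h1 : ∫ x, f x = 1) (hfM : ∀ x, f x ≤ M)
    (hsup : ∀ ε : ℝ, 0 < ε → ∃ x₀, M * Real.exp (-ε) ≤ f x₀) :
    ∫⁻ x, ENNReal.ofReal (f x * Real.log (M / f x)) ≤ (n : ℝ≥0∞) := by
  set h : EuclideanSpace ℝ (Fin n) → ℝ := fun x => f x * Real.log (M / f x) with hhdef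
  set IH : ℝ≥0∞ := ∫⁻ x, ENNReal.ofReal (h x) with hIH
  have hfaem : AEMeasurable f volume := hint.aestronglyMeasurable.aemeasurable
  have hhaem : AEMeasurable (fun x => ENNReal.ofReal (h x)) volume := by
    apply AEMeasurable.ennreal_ofReal
    exact hfaem.mul
      ((Real.measurable_log.comp (measurable_const.div measurable_id)).comp_aemeasurable hfaem)
  have hhnn : ∀ x, 0 ≤ h x := by
    intro x
    rcases eq_or_lt_of_le (hnn x) with hx | hx
    · rw [hhdef]; simp [← hx]
    · apply mul_nonneg (hnn x)
      apply Real.log_nonneg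
      rw [le_div_iff₀ hx, one_mul]
      exact hfM x
  have master : ∀ l : ℝ, 0 < l → l < 1 →
      ENNReal.ofReal (M^(l-1)) + ENNReal.ofReal ((1-l)*M^(l-1)) * IH
        ≤ ENNReal.ofReal (M^(l-1) * Real.exp ((1-l)*(1-l)) * ((l^n)⁻¹)) := by
    intro l hl hl1
    obtain ⟨x₀, hx₀⟩ := hsup (1-l) (by linarith)
    have hx₀pos : 0 < f x₀ := lt_of_lt_of_le (by positivity) hx₀
    have hMl : (0:ℝ) < M ^ (l-1) := Real.rpow_pos_of_pos hM _
    have pt1 : ∀ x, f x * M^(l-1) + (1-l) * M^(l-1) * h x ≤ f x ^ l := by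
      intro x
      rcases eq_or_lt_of_le (hnn x) with hx | hx
      · rw [hhdef]
        simp only [← hx, zero_mul, mul_zero, add_zero, zero_add]
        rw [Real.zero_rpow (ne_of_gt hl)]
      · have e1 : f x ^ l = f x * (M^(l-1) * (f x / M) ^ (l-1)) := by
          calc f x ^ l = f x ^ ((1:ℝ) + (l-1)) := by norm_num
            _ = f x * f x ^ (l-1) := by rw [Real.rpow_add hx, Real.rpow_one]
            _ = f x * (M * (f x / M)) ^ (l-1) := by
                rw [← mul_div_assoc, mul_div_cancel_left₀ _ (ne_of_gt hM)]
            _ = f x * (M^(l-1) * (f x / M) ^ (l-1)) := by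
                rw [Real.mul_rpow hM.le (by positivity)]
        have e2 : (f x / M) ^ (l-1) = Real.exp ((1-l) * Real.log (M / f x)) := by
          rw [Real.rpow_def_of_pos (by positivity)]
          congr 1
          have : Real.log (f x / M) = - Real.log (M / f x) := by
            rw [← Real.log_inv, inv_div]
          rw [this]
          ring
        have e3 : 1 + (1-l) * Real.log (M / f x) ≤ Real.exp ((1-l) * Real.log (M / f x)) := by
          have := Real.add_one_le_exp ((1-l) * Real.log (M / f x))
          linarith
        rw [e1, e2]
        have hco : 0 ≤ f x * M^(l-1) := by positivity
        calc f x * M^(l-1) + (1-l) * M^(l-1) * h x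
            = f x * M^(l-1) * (1 + (1-l) * Real.log (M / f x)) := by rw [hhdef]; ring
          _ ≤ f x * M^(l-1) * Real.exp ((1-l) * Real.log (M / f x)) := by
              apply mul_le_mul_of_nonneg_left e3 hco
          _ = f x * (M^(l-1) * Real.exp ((1-l) * Real.log (M / f x))) := by ring
    have pt2 : ∀ x, f x ^ l ≤ f (l • x + (1-l) • x₀) * f x₀ ^ (l-1) := by
      intro x
      have hkey := hlc x x₀ l hl hl1
      have := mul_le_mul_of_nonneg_right hkey (Real.rpow_nonneg hx₀pos.le (l-1))
      calc f x ^ l = f x ^ l * (f x₀ ^ (1-l) * f x₀ ^ (l-1)) := by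
            rw [← Real.rpow_add hx₀pos]
            norm_num
        _ = f x ^ l * f x₀ ^ (1-l) * f x₀ ^ (l-1) := by ring
        _ ≤ f (l • x + (1-l) • x₀) * f x₀ ^ (l-1) := this
    have hup : ∫⁻ x, ENNReal.ofReal (f x ^ l)
        ≤ ENNReal.ofReal (f x₀ ^ (l-1) * (l^n)⁻¹) := by
      have step1 : ∫⁻ x, ENNReal.ofReal (f x ^ l)
          ≤ ∫⁻ x, ENNReal.ofReal (f (l • x + (1-l) • x₀)) * ENNReal.ofReal (f x₀ ^ (l-1)) := by
        apply lintegral_mono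
        intro x
        dsimp only
        rw [← ENNReal.ofReal_mul (hnn _)]
        exact ENNReal.ofReal_le_ofReal (pt2 x)
      have step2 : ∫⁻ x, ENNReal.ofReal (f (l • x + (1-l) • x₀)) * ENNReal.ofReal (f x₀ ^ (l-1))
          = ENNReal.ofReal (f x₀ ^ (l-1)) * ENNReal.ofReal ((l^n)⁻¹) := by
        rw [lintegral_mul_const' _ _ ENNReal.ofReal_ne_top]
        rw [lint_affine volume _ (hfaem.ennreal_ofReal) (ne_of_gt hl) ((1-l) • x₀)]
        rw [lint_f_one hnn hint h1, mul_one, finrank_euclideanSpace_fin]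
        rw [abs_of_pos (by positivity), mul_comm]
      rw [step2] at step1
      rw [← ENNReal.ofReal_mul (by positivity)] at step1
      exact step1
    have hdown : ENNReal.ofReal (M^(l-1)) + ENNReal.ofReal ((1-l)*M^(l-1)) * IH
        ≤ ∫⁻ x, ENNReal.ofReal (f x ^ l) := by
      have hconn : (0:ℝ) ≤ (1-l)*M^(l-1) := mul_nonneg (by linarith) hMl.le
      have e4 : ∀ x, ENNReal.ofReal (f x * M^(l-1)) + ENNReal.ofReal ((1-l)*M^(l-1) * h x)
          ≤ ENNReal.ofReal (f x ^ l) := by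
        intro x
        rw [← ENNReal.ofReal_add (mul_nonneg (hnn x) hMl.le) (mul_nonneg hconn (hhnn x))]
        apply ENNReal.ofReal_le_ofReal
        have := pt1 x
        nlinarith [this]
      have i1 : ∫⁻ x, ENNReal.ofReal (f x * M^(l-1)) = ENNReal.ofReal (M^(l-1)) := by
        have : ∀ x, ENNReal.ofReal (f x * M^(l-1))
            = ENNReal.ofReal (M^(l-1)) * ENNReal.ofReal (f x) := by
          intro x
          rw [← ENNReal.ofReal_mul hMl.le, mul_comm]
        simp_rw [this]
        rw [lintegral_const_mul' _ _ ENNReal.ofReal_ne_top, lint_f_one hnn hint h1, mul_one]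
      have i2 : ∫⁻ x, ENNReal.ofReal ((1-l)*M^(l-1) * h x)
          = ENNReal.ofReal ((1-l)*M^(l-1)) * IH := by
        have : ∀ x, ENNReal.ofReal ((1-l)*M^(l-1) * h x)
            = ENNReal.ofReal ((1-l)*M^(l-1)) * ENNReal.ofReal (h x) := by
          intro x
          rw [← ENNReal.ofReal_mul hconn]
        simp_rw [this]
        rw [lintegral_const_mul' _ _ ENNReal.ofReal_ne_top, hIH]
      calc ENNReal.ofReal (M^(l-1)) + ENNReal.ofReal ((1-l)*M^(l-1)) * IH
          = ∫⁻ x, (ENNReal.ofReal (f x * M^(l-1)) + ENNReal.ofReal ((1-l)*M^(l-1) * h x)) := by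
            rw [lintegral_add_left' ((hfaem.mul_const _).ennreal_ofReal), i1, i2]
        _ ≤ ∫⁻ x, ENNReal.ofReal (f x ^ l) := lintegral_mono e4
    have hx₀b : f x₀ ^ (l-1) ≤ M^(l-1) * Real.exp ((1-l)*(1-l)) := by
      calc f x₀ ^ (l-1) ≤ (M * Real.exp (-(1-l))) ^ (l-1) :=
            Real.rpow_le_rpow_of_nonpos (by positivity) hx₀ (by linarith)
        _ = M^(l-1) * Real.exp ((1-l)*(1-l)) := by
            rw [Real.mul_rpow hM.le (Real.exp_pos _).le, ← Real.exp_mul]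
            congr 2
            ring
    refine le_trans (le_trans hdown hup) (ENNReal.ofReal_le_ofReal ?_)
    have : f x₀ ^ (l-1) * (l^n)⁻¹ ≤ (M^(l-1) * Real.exp ((1-l)*(1-l))) * (l^n)⁻¹ :=
      mul_le_mul_of_nonneg_right hx₀b (by positivity)
    linarith [this]
  have hfin : IH ≠ ⊤ := by
    intro htop
    have hm := master (1/2) (by norm_num) (by norm_num)
    rw [htop, ENNReal.mul_top (by
      simp only [ne_eq, ENNReal.ofReal_eq_zero, not_le]
      have : (0:ℝ) < M ^ ((1:ℝ)/2-1) := Real.rpow_pos_of_pos hM _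
      nlinarith)] at hm
    simp only [add_top, top_le_iff] at hm
    exact ENNReal.ofReal_ne_top hm
  set I : ℝ := IH.toReal with hIdef
  have hIreal : ∀ l : ℝ, 0 < l → l < 1 →
      I ≤ (Real.exp ((1-l)*(1-l)) * ((l^n)⁻¹) - 1)/(1-l) := by
    intro l hl hl1
    have hMl : (0:ℝ) < M ^ (l-1) := Real.rpow_pos_of_pos hM _
    have hconn : (0:ℝ) ≤ (1-l)*M^(l-1) := mul_nonneg (by linarith) hMl.le
    have hm := master l hl hl1
    have h2 : M^(l-1) + (1-l)*M^(l-1) * I ≤ M^(l-1) * Real.exp ((1-l)*(1-l)) * (l^n)⁻¹ := by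
      have hmr := ENNReal.toReal_mono ENNReal.ofReal_ne_top hm
      rwa [ENNReal.toReal_add ENNReal.ofReal_ne_top
        (ENNReal.mul_ne_top ENNReal.ofReal_ne_top hfin), ENNReal.toReal_mul,
        ENNReal.toReal_ofReal hMl.le, ENNReal.toReal_ofReal hconn,
        ENNReal.toReal_ofReal (by positivity)] at hmr
    have h3 : 1 + (1-l) * I ≤ Real.exp ((1-l)*(1-l)) * (l^n)⁻¹ := by
      have hfact : M^(l-1) * (1 + (1-l)*I) ≤ M^(l-1) * (Real.exp ((1-l)*(1-l)) * (l^n)⁻¹) := by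
        nlinarith [h2]
      exact le_of_mul_le_mul_left hfact hMl
    rw [le_div_iff₀ (by linarith : (0:ℝ) < 1-l)]
    linarith
  have hInn : 0 ≤ I := ENNReal.toReal_nonneg
  set G : ℝ → ℝ := fun l => Real.exp ((1-l)*(1-l)) * ((l^n)⁻¹) with hGdef
  have hG1 : G 1 = 1 := by simp [hGdef]
  have hG : HasDerivAt G (-(n:ℝ)) 1 := by
    have h1' : HasDerivAt (fun l:ℝ => 1-l) (-1) 1 := (hasDerivAt_id 1).const_sub 1
    have hu : HasDerivAt (fun l:ℝ => (1-l)*(1-l)) 0 1 := by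
      have := h1'.fun_mul h1'
      simpa using this
    have hexp : HasDerivAt (fun l:ℝ => Real.exp ((1-l)*(1-l))) 0 1 := by
      have := hu.exp
      simpa using this
    have hpow : HasDerivAt (fun l:ℝ => (l^n)) ((n:ℝ)*1^(n-1)) 1 := hasDerivAt_pow n 1
    have hinv : HasDerivAt (fun l:ℝ => (l^n)⁻¹) (-(n:ℝ)) 1 := by
      have := hpow.fun_inv (by simp : (1:ℝ)^n ≠ 0)
      simpa using this
    have := hexp.fun_mul hinv
    simpa using this
  have hslope := hasDerivAt_iff_tendsto_slope.mp hG
  have htends : Tendsto (fun l => (G l - 1)/(1-l)) (𝓝[<] (1:ℝ)) (𝓝 (n:ℝ)) := by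
    have h1' : Tendsto (slope G 1) (𝓝[<] (1:ℝ)) (𝓝 (-(n:ℝ))) :=
      hslope.mono_left (nhdsWithin_mono _ (fun x hx => ne_of_lt hx))
    have h2' := h1'.neg
    rw [neg_neg] at h2'
    apply h2'.congr
    intro l
    rw [slope_def_field, hG1]
    rw [show (1:ℝ) - l = -(l-1) by ring, div_neg]
  have hIn : I ≤ (n:ℝ) := by
    apply ge_of_tendsto htends
    have hmem : Ioo (0:ℝ) 1 ∈ 𝓝[<] (1:ℝ) :=
      Ioo_mem_nhdsLT_of_mem (⟨zero_lt_one, le_rfl⟩ : (1:ℝ) ∈ Ioc 0 1)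
    filter_upwards [hmem] with l hl
    exact hIreal l hl.1 hl.2
  calc IH = ENNReal.ofReal I := (ENNReal.ofReal_toReal hfin).symm
    _ ≤ ENNReal.ofReal (n:ℝ) := ENNReal.ofReal_le_ofReal hIn
    _ = (n : ℝ≥0∞) := ENNReal.ofReal_natCast n

end Auxiliary

set_option maxHeartbeats 4000000 in
/-- Klartag, Lemma 4.7: a log-concave density `f` on ℝⁿ with zero mean and covariance `β·Id`
satisfies `f(0) ≥ e^{−n} sup f ≥ (c/√β)ⁿ` for a universal constant `0 < c < 1`. -/
theorem density_at_zero_large :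
    ∃ c : ℝ, 0 < c ∧ c < 1 ∧
      ∀ (n : ℕ), 1 ≤ n → ∀ β : ℝ, 0 < β →
        ∀ f : EuclideanSpace ℝ (Fin n) → ℝ,
          LogConcave f →
          (∀ x, 0 ≤ f x) → (∫ x, f x = 1) → (∫ x, f x • x = 0) →
          (∀ θ : EuclideanSpace ℝ (Fin n), ∫ x, f x * ⟪x, θ⟫ ^ 2 = β * ‖θ‖ ^ 2) →
          Real.exp (-(n : ℝ)) * (⨆ x, f x) ≤ f 0 ∧
          (c / Real.sqrt β) ^ n ≤ Real.exp (-(n : ℝ)) * ⨆ x, f x := by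
  refine ⟨1/100, by norm_num, by norm_num, ?_⟩
  intro n hn β hβ f hlc hnn hint1 hmean hcov
  have hn1 : (1:ℝ) ≤ (n:ℝ) := by exact_mod_cast hn
  have hnpos : (0:ℝ) < (n:ℝ) := by linarith
  -- integrability of f
  have hf_int : Integrable f := by
    by_contra hni
    rw [integral_undef hni] at hint1
    norm_num at hint1
  -- second moments
  set θvec : Fin n → EuclideanSpace ℝ (Fin n) := fun i => EuclideanSpace.single i (1:ℝ)
    with hθvec
  have hwi_int : ∀ i, Integrable (fun x => f x * ⟪x, θvec i⟫^2) := by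
    intro i
    by_contra hni
    have hc := hcov (θvec i)
    rw [integral_undef hni, hθvec, EuclideanSpace.norm_single] at hc
    norm_num at hc
    exact (ne_of_gt hβ) hc.symm
  have hw_eq : ∀ x : EuclideanSpace ℝ (Fin n), f x * ‖x‖^2 = ∑ i, f x * ⟪x, θvec i⟫^2 := by
    intro x
    rw [← Finset.mul_sum]
    congr 1
    have hi : ∀ i, ⟪x, θvec i⟫ = x i := by
      intro i
      rw [hθvec]
      simp [EuclideanSpace.inner_single_right]
    calc ‖x‖^2 = ∑ i, ‖x i‖^2 := by
          rw [EuclideanSpace.norm_eq, Real.sq_sqrt (by positivity)]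
      _ = ∑ i, ⟪x, θvec i⟫^2 := by
          apply Finset.sum_congr rfl
          intro i _
          rw [hi i, Real.norm_eq_abs, sq_abs]
  have hw_int : Integrable (fun x => f x * ‖x‖^2) := by
    rw [show (fun x : EuclideanSpace ℝ (Fin n) => f x * ‖x‖^2)
      = fun x => ∑ i, f x * ⟪x, θvec i⟫^2 from funext hw_eq]
    exact integrable_finset_sum _ (fun i _ => hwi_int i)
  have hw_val : ∫ x, f x * ‖x‖^2 = (n:ℝ) * β := by
    rw [show (fun x : EuclideanSpace ℝ (Fin n) => f x * ‖x‖^2)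
      = fun x => ∑ i, f x * ⟪x, θvec i⟫^2 from funext hw_eq]
    rw [integral_finset_sum _ (fun i _ => hwi_int i)]
    have : ∀ i : Fin n, ∫ x, f x * ⟪x, θvec i⟫^2 = β := by
      intro i
      rw [hcov (θvec i), hθvec, EuclideanSpace.norm_single]
      norm_num
    rw [Finset.sum_congr rfl (fun i _ => this i)]
    rw [Finset.sum_const, Finset.card_univ, Fintype.card_fin, nsmul_eq_mul]
  -- first moment integrable
  have hmean_int : Integrable (fun x => f x • x) := by
    apply Integrable.mono' (hf_int.add hw_int)
      (hf_int.1.smul aestronglyMeasurable_id)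
    filter_upwards with x
    show ‖f x • x‖ ≤ f x + f x * ‖x‖^2
    rw [norm_smul, Real.norm_eq_abs, abs_of_nonneg (hnn x)]
    have hb : ‖x‖ ≤ 1 + ‖x‖^2 := by nlinarith [norm_nonneg x, sq_nonneg (1 - ‖x‖)]
    have := mul_le_mul_of_nonneg_left hb (hnn x)
    calc f x * ‖x‖ ≤ f x * (1 + ‖x‖^2) := this
      _ = f x + f x * ‖x‖^2 := by ring
  -- bounded above, and the supremum
  have hbdd : BddAbove (range f) := logconcave_bddAbove hlc hnn hf_int hint1
  have hfM : ∀ x, f x ≤ ⨆ y, f y := fun x => le_ciSup hbdd x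
  set M := ⨆ y, f y with hMdef
  have hMpos : 0 < M := by
    have hex : ∃ x, 0 < f x := by
      by_contra hno
      push_neg at hno
      have hz : ∀ x, f x = 0 := fun x => le_antisymm (hno x) (hnn x)
      rw [show f = fun _ => (0:ℝ) from funext hz] at hint1
      simp at hint1
    obtain ⟨x, hx⟩ := hex
    exact lt_of_lt_of_le hx (hfM x)
  -- entropy bound
  have hsup : ∀ ε : ℝ, 0 < ε → ∃ x₀, M * Real.exp (-ε) ≤ f x₀ := by
    intro ε hε
    have hlt : M * Real.exp (-ε) < M := by
      have he1 : Real.exp (-ε) < 1 := Real.exp_lt_one_iff.mpr (by linarith)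
      nlinarith [Real.exp_pos (-ε)]
    obtain ⟨x₀, hx₀⟩ := exists_lt_of_lt_ciSup hlt
    exact ⟨x₀, hx₀.le⟩
  have hent := entropy_le hMpos hlc hnn hf_int hint1 hfM hsup
  -- f log (M/f) is integrable
  set h : EuclideanSpace ℝ (Fin n) → ℝ := fun x => f x * Real.log (M / f x) with hhdef
  have hhnn : ∀ x, 0 ≤ h x := by
    intro x
    rcases eq_or_lt_of_le (hnn x) with hx | hx
    · rw [hhdef]; simp [← hx]
    · apply mul_nonneg (hnn x)
      apply Real.log_nonneg
      rw [le_div_iff₀ hx, one_mul]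
      exact hfM x
  have hfaem : AEMeasurable f volume := hf_int.aestronglyMeasurable.aemeasurable
  have hhaesm : AEStronglyMeasurable h volume := by
    apply AEMeasurable.aestronglyMeasurable
    exact hfaem.mul
      ((Real.measurable_log.comp (measurable_const.div measurable_id)).comp_aemeasurable hfaem)
  have hhint : Integrable h := by
    refine ⟨hhaesm, ?_⟩
    rw [hasFiniteIntegral_iff_ofReal (Eventually.of_forall hhnn)]
    exact lt_of_le_of_lt hent (ENNReal.natCast_lt_top n)
  -- Jensen
  have h0U := zero_mem_interior_support hβ hlc hnn hint1 hmean_int hmean hcov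
  have hf0pos : 0 < f 0 := (interior_subset h0U : (0:EuclideanSpace ℝ (Fin n)) ∈ {x | 0 < f x})
  have hjen := jensen_lower hMpos hlc hnn hf_int hint1 hmean_int hmean h0U hhint
  have hinteg_eq : ∫ x, h x = (∫⁻ x, ENNReal.ofReal (h x)).toReal := by
    rw [integral_eq_lintegral_of_nonneg_ae (Eventually.of_forall hhnn) hhaesm]
  have hlogle : Real.log (M / f 0) ≤ (n:ℝ) := by
    calc Real.log (M / f 0) ≤ ∫ x, h x := hjen
      _ = (∫⁻ x, ENNReal.ofReal (h x)).toReal := hinteg_eq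
      _ ≤ (n:ℝ) := by
          have := ENNReal.toReal_mono (by simp) hent
          simpa using this
  have conj1 : Real.exp (-(n:ℝ)) * M ≤ f 0 := by
    have hm : M / f 0 ≤ Real.exp (n:ℝ) :=
      (Real.log_le_iff_le_exp (by positivity)).mp hlogle
    rw [div_le_iff₀ hf0pos] at hm
    rw [Real.exp_neg]
    rw [inv_mul_le_iff₀ (Real.exp_pos _)]
    exact hm
  refine ⟨conj1, ?_⟩
  -- second conjunct
  haveI : Nonempty (Fin n) := Fin.pos_iff_nonempty.mp (by omega)
  set R : ℝ := Real.sqrt (2*(n:ℝ)*β) with hRdef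
  have hR : 0 < R := Real.sqrt_pos.mpr (by positivity)
  have hR2 : R^2 = 2*(n:ℝ)*β := Real.sq_sqrt (by positivity)
  have hcompl : ∫ x in (Metric.ball (0:EuclideanSpace ℝ (Fin n)) R)ᶜ, f x ≤ 1/2 := by
    have hb1 : ∀ x ∈ (Metric.ball (0:EuclideanSpace ℝ (Fin n)) R)ᶜ,
        f x ≤ f x * ‖x‖^2 / R^2 := by
      intro x hx
      have hxR : R ≤ ‖x‖ := by
        simpa [Metric.mem_ball, dist_zero_right, not_lt] using hx
      have hsq : R^2 ≤ ‖x‖^2 := by nlinarith [hR.le, norm_nonneg x]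
      rw [le_div_iff₀ (by positivity)]
      nlinarith [hnn x]
    calc ∫ x in (Metric.ball (0:EuclideanSpace ℝ (Fin n)) R)ᶜ, f x
        ≤ ∫ x in (Metric.ball (0:EuclideanSpace ℝ (Fin n)) R)ᶜ, f x * ‖x‖^2 / R^2 := by
          apply setIntegral_mono_on hf_int.integrableOn
            ((hw_int.div_const _).integrableOn) measurableSet_ball.compl hb1
      _ ≤ ∫ x, f x * ‖x‖^2 / R^2 := by
          apply setIntegral_le_integral (hw_int.div_const _)
          filter_upwards with x
          have := hnn x
          positivity
      _ = ((n:ℝ)*β)/R^2 := by rw [integral_div, hw_val]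
      _ = 1/2 := by
          rw [hR2]
          field_simp
  have hball : 1/2 ≤ ∫ x in Metric.ball (0:EuclideanSpace ℝ (Fin n)) R, f x := by
    have hsplitv := integral_add_compl (measurableSet_ball
      (x := (0:EuclideanSpace ℝ (Fin n))) (ε := R)) hf_int
    rw [hint1] at hsplitv
    linarith
  have hΓpos : 0 < Real.Gamma ((n:ℝ)/2 + 1) := Real.Gamma_pos_of_pos (by positivity)
  have hvol : (volume (Metric.ball (0:EuclideanSpace ℝ (Fin n)) R)).toReal
      = R^n * (Real.sqrt π ^ n / Real.Gamma ((n:ℝ)/2 + 1)) := by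
    rw [EuclideanSpace.volume_ball]
    rw [ENNReal.toReal_mul, ENNReal.toReal_pow, ENNReal.toReal_ofReal hR.le,
      ENNReal.toReal_ofReal (by positivity), Fintype.card_fin]
  set V : ℝ := R^n * (Real.sqrt π ^ n / Real.Gamma ((n:ℝ)/2 + 1)) with hVdef
  have hVpos : 0 < V := by positivity
  have hMV : 1/2 ≤ M * V := by
    calc (1:ℝ)/2 ≤ ∫ x in Metric.ball (0:EuclideanSpace ℝ (Fin n)) R, f x := hball
      _ ≤ ∫ _x in Metric.ball (0:EuclideanSpace ℝ (Fin n)) R, M := by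
          apply setIntegral_mono_on hf_int.integrableOn
            (integrableOn_const measure_ball_lt_top.ne) measurableSet_ball
            (fun x _ => hfM x)
      _ = (volume (Metric.ball (0:EuclideanSpace ℝ (Fin n)) R)).toReal * M := by
          rw [setIntegral_const, smul_eq_mul, measureReal_def]
      _ = M * V := by rw [hvol, mul_comm]
  have hM_lb : 1/(2*V) ≤ M := by
    rw [div_le_iff₀ (by positivity)]
    linarith
  -- numeric part
  have hβs : 0 < Real.sqrt β := Real.sqrt_pos.mpr hβ
  have hRsplit : R = Real.sqrt (2*(n:ℝ)) * Real.sqrt β := by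
    rw [hRdef, Real.sqrt_mul (by positivity)]
  have key1 : Real.sqrt (2*(n:ℝ)) * Real.sqrt π / 100
      ≤ (1/2) * (Real.exp (-1) * Real.sqrt ((n:ℝ)/(2*Real.exp 1))) := by
    have hlhs_nn : 0 ≤ Real.sqrt (2*(n:ℝ)) * Real.sqrt π / 100 := by positivity
    have hrhs_nn : 0 ≤ (1/2) * (Real.exp (-1) * Real.sqrt ((n:ℝ)/(2*Real.exp 1))) := by positivity
    have hsq : (Real.sqrt (2*(n:ℝ)) * Real.sqrt π / 100)^2
        ≤ ((1/2) * (Real.exp (-1) * Real.sqrt ((n:ℝ)/(2*Real.exp 1))))^2 := by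
      have s1 : (Real.sqrt (2*(n:ℝ)))^2 = 2*(n:ℝ) := Real.sq_sqrt (by positivity)
      have s2 : (Real.sqrt π)^2 = π := Real.sq_sqrt Real.pi_pos.le
      have s3 : (Real.sqrt ((n:ℝ)/(2*Real.exp 1)))^2 = (n:ℝ)/(2*Real.exp 1) :=
        Real.sq_sqrt (by positivity)
      rw [div_pow, mul_pow, mul_pow, mul_pow, s1, s2, s3]
      rw [← Real.exp_nat_mul]
      norm_num
      rw [Real.exp_neg]
      -- goal-ish: 2n*π/10000 ≤ (1/4) * ((exp 1)⁻¹)^2 * (n/(2 e))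
      have hE1 : (2:ℝ) < Real.exp 1 := by
        have := Real.exp_one_gt_d9; linarith
      have hE2 : Real.exp 1 < 2.7182818286 := Real.exp_one_lt_d9
      have hπ : π < 3.15 := by linarith [Real.pi_lt_d2]
      have hπ0 : 0 < π := Real.pi_pos
      have he2 : Real.exp 2 = Real.exp 1 * Real.exp 1 := by
        rw [← Real.exp_add]; norm_num
      have hE3 : Real.exp 2 ≤ 7.4 := by nlinarith
      have hu : (1:ℝ)/7.4 ≤ (Real.exp 2)⁻¹ := by
        rw [← one_div]
        exact one_div_le_one_div_of_le (Real.exp_pos 2) hE3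
      have hv : (1:ℝ)/5.44 ≤ 1/(2*Real.exp 1) := by
        apply one_div_le_one_div_of_le (by positivity)
        nlinarith
      have hmono1 : (n:ℝ) * (1/5.44) ≤ (n:ℝ) * (1/(2*Real.exp 1)) :=
        mul_le_mul_of_nonneg_left hv hnpos.le
      have hmono2 : (1/7.4) * ((n:ℝ) * (1/5.44))
          ≤ (Real.exp 2)⁻¹ * ((n:ℝ) * (1/(2*Real.exp 1))) := by
        apply mul_le_mul hu hmono1 (by positivity) (by positivity)
      calc 2 * (n:ℝ) * π / 10000 ≤ 2 * (n:ℝ) * 3.15 / 10000 := by nlinarith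
        _ ≤ (1/4) * ((1/7.4) * ((n:ℝ) * (1/5.44))) := by nlinarith
        _ ≤ (1/4) * ((Real.exp 2)⁻¹ * ((n:ℝ) * (1/(2*Real.exp 1)))) := by linarith
        _ = 1/4 * ((Real.exp 2)⁻¹ * ((n:ℝ)/(2*Real.exp 1))) := by ring
    calc Real.sqrt (2*(n:ℝ)) * Real.sqrt π / 100
        = Real.sqrt ((Real.sqrt (2*(n:ℝ)) * Real.sqrt π / 100)^2) :=
          (Real.sqrt_sq hlhs_nn).symm
      _ ≤ Real.sqrt (((1/2) * (Real.exp (-1) * Real.sqrt ((n:ℝ)/(2*Real.exp 1))))^2) :=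
          Real.sqrt_le_sqrt hsq
      _ = (1/2) * (Real.exp (-1) * Real.sqrt ((n:ℝ)/(2*Real.exp 1))) := Real.sqrt_sq hrhs_nn
  have key2 : (Real.sqrt ((n:ℝ)/(2*Real.exp 1)))^n ≤ Real.Gamma ((n:ℝ)/2 + 1) := by
    have hgl := gamma_lb n
    have heq : (Real.sqrt ((n:ℝ)/(2*Real.exp 1)))^n = ((n:ℝ)/(2*Real.exp 1)) ^ ((n:ℝ)/2) := by
      rw [show ((n:ℝ)/2) = ((n:ℝ)/2 : ℝ) from rfl, Real.rpow_div_two_eq_sqrt _ (by positivity),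
        Real.rpow_natCast]
    rw [heq]
    exact hgl
  have hexp_pow : Real.exp (-(n:ℝ)) = (Real.exp (-1))^n := by
    rw [← Real.exp_nat_mul]
    congr 1
    ring
  -- final chain
  have hfinal : ((1:ℝ)/100 / Real.sqrt β)^n * (2*V) ≤ Real.exp (-(n:ℝ)) := by
    have hprod : ((1:ℝ)/100 / Real.sqrt β)^n * R^n * Real.sqrt π ^ n
        = (Real.sqrt (2*(n:ℝ)) * Real.sqrt π / 100)^n := by
      rw [← mul_pow, ← mul_pow]
      congr 1
      rw [hRsplit]
      field_simp
    have hD_nn : 0 ≤ Real.exp (-1) * Real.sqrt ((n:ℝ)/(2*Real.exp 1)) := by positivity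
    have h2n : (2:ℝ) * (1/2)^n ≤ 1 := by
      have : ((1:ℝ)/2)^n ≤ (1/2)^1 := pow_le_pow_of_le_one (by norm_num) (by norm_num) hn
      norm_num at this ⊢
      linarith
    have hchain : ((1:ℝ)/100 / Real.sqrt β)^n * (2*V)
        = 2 * ((Real.sqrt (2*(n:ℝ)) * Real.sqrt π / 100)^n / Real.Gamma ((n:ℝ)/2 + 1)) := by
      rw [hVdef]
      rw [← hprod]
      ring
    rw [hchain]
    rw [hexp_pow]
    have hstep : (Real.sqrt (2*(n:ℝ)) * Real.sqrt π / 100)^n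
        ≤ ((1/2) * (Real.exp (-1) * Real.sqrt ((n:ℝ)/(2*Real.exp 1))))^n :=
      pow_le_pow_left₀ (by positivity) key1 n
    have hgam : (Real.exp (-1) * Real.sqrt ((n:ℝ)/(2*Real.exp 1)))^n
        ≤ (Real.exp (-1))^n * Real.Gamma ((n:ℝ)/2 + 1) := by
      rw [mul_pow]
      exact mul_le_mul_of_nonneg_left key2 (by positivity)
    rw [mul_div_assoc', div_le_iff₀ hΓpos]
    calc 2 * (Real.sqrt (2*(n:ℝ)) * Real.sqrt π / 100)^n
        ≤ 2 * ((1/2) * (Real.exp (-1) * Real.sqrt ((n:ℝ)/(2*Real.exp 1))))^n := by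
          linarith [hstep]
      _ = (2 * (1/2)^n) * (Real.exp (-1) * Real.sqrt ((n:ℝ)/(2*Real.exp 1)))^n := by
          rw [mul_pow]; ring
      _ ≤ 1 * (Real.exp (-1) * Real.sqrt ((n:ℝ)/(2*Real.exp 1)))^n := by
          apply mul_le_mul_of_nonneg_right h2n (by positivity)
      _ = (Real.exp (-1) * Real.sqrt ((n:ℝ)/(2*Real.exp 1)))^n := one_mul _
      _ ≤ (Real.exp (-1))^n * Real.Gamma ((n:ℝ)/2 + 1) := hgam
  calc ((1:ℝ)/100 / Real.sqrt β)^n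
      ≤ Real.exp (-(n:ℝ)) * (1/(2*V)) := by
        rw [mul_one_div, le_div_iff₀ (by positivity)]
        exact hfinal
    _ ≤ Real.exp (-(n:ℝ)) * M :=
        mul_le_mul_of_nonneg_left hM_lb (Real.exp_nonneg _)
end
end

section
/- Let n ≥ 2 be an integer, let α ≥ 5, and let f: [0,∞) → [0,∞) be a log-concave function with ∫₀^∞ f < ∞. Denote t₀ = sup{ t > 0 : f(t) ≥ e^{−αn} f(0) }. Then ∫₀^{t₀} t^{n−1} f(t) dt ≥ (1 − e^{−αn/8}) ∫₀^∞ t^{n−1} f(t) dt. -/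
open MeasureTheory Real Set Filter
open scoped ENNReal NNReal

noncomputable section

/-- Numeric inequality used in the proof. -/
lemma aux_log_bound {α : ℝ} (hα : 5 ≤ α) : Real.log α + 32 / 15 ≤ 111 * α / 136 := by
  have hα0 : (0:ℝ) < α := by linarith
  have h1 : Real.log (α / 5) = Real.log α - Real.log 5 :=
    Real.log_div (by positivity) (by norm_num)
  have h2 : Real.log (α / 5) ≤ α / 5 - 1 := Real.log_le_sub_one_of_pos (by positivity)
  have h3 : Real.log ((5:ℝ) / 4) = Real.log 5 - Real.log 4 :=
    Real.log_div (by norm_num) (by norm_num)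
  have h4 : Real.log (5 / 4) ≤ 5 / 4 - 1 := Real.log_le_sub_one_of_pos (by norm_num)
  have h5 : Real.log 4 = 2 * Real.log 2 := by
    rw [show (4:ℝ) = 2 ^ 2 by norm_num, Real.log_pow]
    norm_num
  have h6 : Real.log 2 < 0.6931471808 := Real.log_two_lt_d9
  linarith

/-- Lower bound from log-concavity. -/
lemma lc_lower (f : ℝ → ℝ) (hf_lc : LogConcaveOnNonneg f) {c s t : ℝ}
    (hf0 : 0 < f 0) (ht : 0 < t) (hts : t < s)
    (hfs : Real.exp (-c) * f 0 ≤ f s) :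
    Real.exp (-(c * (t / s))) * f 0 ≤ f t := by
  have hs : 0 < s := ht.trans hts
  set l := t / s with hl_def
  have hl0 : 0 < l := div_pos ht hs
  have hl1 : l < 1 := (div_lt_one hs).2 hts
  have key := hf_lc s hs.le 0 le_rfl l hl0 hl1
  have hls : l * s + (1 - l) * 0 = t := by
    rw [hl_def]; field_simp; ring
  rw [hls] at key
  refine le_trans (le_trans ?_ (mul_le_mul_of_nonneg_right
    (Real.rpow_le_rpow (by positivity) hfs hl0.le) (Real.rpow_nonneg hf0.le _))) key
  rw [Real.mul_rpow (Real.exp_nonneg _) hf0.le, ← Real.exp_mul, mul_assoc,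
    ← Real.rpow_add hf0, show l + (1 - l) = (1:ℝ) by ring, Real.rpow_one, neg_mul]

/-- Upper bound from log-concavity. -/
lemma lc_upper (f : ℝ → ℝ) (hf_lc : LogConcaveOnNonneg f) {c u t : ℝ}
    (hf0 : 0 < f 0) (hft : 0 ≤ f t) (hu : 0 < u) (hut : u < t)
    (hfu : f u ≤ Real.exp (-c) * f 0) :
    f t ≤ Real.exp (-(c * (t / u))) * f 0 := by
  have ht : 0 < t := hu.trans hut
  set l := u / t with hl_def
  have hl0 : 0 < l := div_pos hu ht
  have hl1 : l < 1 := (div_lt_one ht).2 hut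
  have key := hf_lc t ht.le 0 le_rfl l hl0 hl1
  have hlt : l * t + (1 - l) * 0 = u := by
    rw [hl_def]; field_simp; ring
  rw [hlt] at key
  have h1 : f t ^ l * f 0 ^ (1 - l) ≤ (Real.exp (-c) * f 0 ^ l) * f 0 ^ (1 - l) := by
    refine (key.trans hfu).trans (le_of_eq ?_)
    rw [mul_assoc, ← Real.rpow_add hf0, show l + (1 - l) = (1:ℝ) by ring, Real.rpow_one]
  have h2 : f t ^ l ≤ Real.exp (-c) * f 0 ^ l :=
    le_of_mul_le_mul_right h1 (Real.rpow_pos_of_pos hf0 (1 - l))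
  have hident : -(c * (t / u)) * l = -c := by
    rw [hl_def]; field_simp [hu.ne', ht.ne']
  have h3 : Real.exp (-c) * f 0 ^ l = (Real.exp (-(c * (t / u))) * f 0) ^ l := by
    rw [Real.mul_rpow (Real.exp_nonneg _) hf0.le, ← Real.exp_mul, hident]
  rw [h3] at h2
  exact (Real.rpow_le_rpow_iff hft (by positivity) hl0).1 h2

set_option maxHeartbeats 2000000 in
/-- Klartag, Lemma 5.2: for a log-concave `f : [0,∞) → [0,∞)` with finite integral and
`t₀ = sup{t > 0 : f(t) ≥ e^{−αn} f(0)}` (computed in the extended reals, so that an unbounded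
set has supremum `∞`), one has
`∫₀^{t₀} t^{n−1} f(t) dt ≥ (1 − e^{−αn/8}) ∫₀^∞ t^{n−1} f(t) dt`. -/
theorem mass_up_to_sublevel_sup
    (n : ℕ) (hn : 2 ≤ n) (α : ℝ) (hα : 5 ≤ α)
    (f : ℝ → ℝ) (hf_nonneg : ∀ t : ℝ, 0 ≤ t → 0 ≤ f t)
    (hf_lc : LogConcaveOnNonneg f) (hf_int : IntegrableOn f (Set.Ioi 0)) :
    (1 - Real.exp (-(α * n / 8))) * ∫ t in Set.Ioi (0 : ℝ), t ^ (n - 1) * f t ≤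
      ∫ t in {t : ℝ | 0 < t ∧ (t : EReal) ≤
          sSup (Real.toEReal '' {s : ℝ | 0 < s ∧ Real.exp (-(α * n)) * f 0 ≤ f s})},
        t ^ (n - 1) * f t := by
  set c : ℝ := α * n with hc_def
  have hn2 : (2:ℝ) ≤ (n:ℝ) := by exact_mod_cast hn
  have hc5n : 5 * (n:ℝ) ≤ c := by nlinarith
  have hc10 : 10 ≤ c := by nlinarith
  set S := {s : ℝ | 0 < s ∧ Real.exp (-c) * f 0 ≤ f s} with hS_def
  set g : ℝ → ℝ := fun t => t ^ (n - 1) * f t with hg_def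
  have hg_nonneg : ∀ t ∈ Ioi (0:ℝ), 0 ≤ g t := fun t ht =>
    mul_nonneg (pow_nonneg (le_of_lt ht) _) (hf_nonneg t (le_of_lt ht))
  have hI_nonneg : 0 ≤ ∫ t in Ioi (0:ℝ), g t :=
    setIntegral_nonneg measurableSet_Ioi hg_nonneg
  have hε0 : 0 ≤ Real.exp (-(c / 8)) := (Real.exp_pos _).le
  by_cases hbdd : BddAbove S
  swap
  · -- S unbounded above: the supremum is ⊤ and the two integrals coincide.
    have htop : sSup (Real.toEReal '' S) = ⊤ := by
      rw [sSup_eq_top]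
      intro b hb
      induction b with
      | bot =>
        obtain ⟨y, hyS, _⟩ := not_bddAbove_iff.1 hbdd 0
        exact ⟨(y : EReal), mem_image_of_mem _ hyS, EReal.bot_lt_coe y⟩
      | coe r =>
        obtain ⟨y, hyS, hy⟩ := not_bddAbove_iff.1 hbdd r
        exact ⟨(y : EReal), mem_image_of_mem _ hyS, EReal.coe_lt_coe_iff.2 hy⟩
      | top => exact absurd hb (lt_irrefl _)
    have hset : {t : ℝ | 0 < t ∧ (t : EReal) ≤ sSup (Real.toEReal '' S)} = Ioi (0:ℝ) := by
      rw [htop]; ext t; simp [mem_Ioi]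
    rw [hset]
    nlinarith [mul_nonneg hε0 hI_nonneg]
  by_cases hS_ne : S.Nonempty
  swap
  · -- S empty: then f vanishes on (0,∞).
    have hSempty : S = (∅ : Set ℝ) := not_nonempty_iff_eq_empty.1 hS_ne
    have hbot : sSup (Real.toEReal '' S) = (⊥ : EReal) := by rw [hSempty]; simp
    have hset : {t : ℝ | 0 < t ∧ (t : EReal) ≤ sSup (Real.toEReal '' S)} = (∅ : Set ℝ) := by
      rw [hbot]; ext t
      simp only [mem_setOf_eq, le_bot_iff, mem_empty_iff_false, iff_false, not_and]
      intro _
      exact EReal.coe_ne_bot t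
    have hf0pos : 0 < f 0 := by
      rcases (hf_nonneg 0 le_rfl).lt_or_eq with h | h
      · exact h
      · exfalso
        have : (1:ℝ) ∈ S := ⟨one_pos, by rw [← h]; simpa [← h] using hf_nonneg 1 zero_le_one⟩
        rw [hSempty] at this
        exact this
    have hIzero : ∫ t in Ioi (0:ℝ), g t = 0 := by
      apply setIntegral_eq_zero_of_forall_eq_zero
      intro t ht
      suffices hft : f t = 0 by simp [hg_def, hft]
      by_contra hft
      have htpos : 0 < t := ht
      have hftpos : 0 < f t := lt_of_le_of_ne (hf_nonneg t htpos.le) (Ne.symm hft)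
      -- construct an element of S, contradiction
      have hnotS : ∀ x : ℝ, x ∉ S := by rw [hSempty]; simp
      have hftlt : f t < Real.exp (-c) * f 0 := by
        by_contra h
        push_neg at h
        exact hnotS t ⟨htpos, h⟩
      have hper : f t < f 0 := by
        have : Real.exp (-c) ≤ 1 := Real.exp_le_one_iff.2 (by linarith)
        nlinarith
      set L := Real.log (f 0 / f t) with hL_def
      have hLpos : 0 < L := Real.log_pos (by rw [lt_div_iff₀ hftpos]; linarith)
      set l := min (1/2 : ℝ) (c / L) with hl_def
      have hl0 : 0 < l := lt_min (by norm_num) (by positivity)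
      have hl1 : l < 1 := lt_of_le_of_lt (min_le_left _ _) (by norm_num)
      have key := hf_lc t htpos.le 0 le_rfl l hl0 hl1
      have hlt : l * t + (1 - l) * 0 = l * t := by ring
      rw [hlt] at key
      have hlL : l * L ≤ c := by
        have h1 : l ≤ c / L := min_le_right _ _
        rw [← le_div_iff₀ hLpos] at *
        linarith
      have hval : Real.exp (-c) * f 0 ≤ f t ^ l * f 0 ^ (1 - l) := by
        have e1 : f t ^ l = f 0 ^ l * Real.exp (-(L * l)) := by
          have : f t = f 0 * (f t / f 0) := by field_simp
          rw [this, Real.mul_rpow hf0pos.le (by positivity),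
            Real.rpow_def_of_pos (by positivity : (0:ℝ) < f t / f 0)]
          congr 2
          rw [show f t / f 0 = (f 0 / f t)⁻¹ by rw [inv_div], Real.log_inv, ← hL_def]
          ring
        rw [e1, mul_comm (f 0 ^ l) _, mul_assoc, ← Real.rpow_add hf0pos,
          show l + (1 - l) = (1:ℝ) by ring, Real.rpow_one]
        have : Real.exp (-c) ≤ Real.exp (-(L * l)) := by
          apply Real.exp_le_exp.2; rw [mul_comm] at hlL ⊢; linarith
        nlinarith
      exact hnotS (l * t) ⟨by positivity, hval.trans key⟩
    rw [hset, hIzero, Measure.restrict_empty, integral_zero_measure]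
    simp
  · -- Main case: S nonempty and bounded above.
    obtain ⟨s₀, hs₀⟩ := hS_ne
    set t₀ := sSup S with ht₀_def
    have ht₀pos : 0 < t₀ := lt_of_lt_of_le hs₀.1 (le_csSup hbdd hs₀)
    have hf0pos : 0 < f 0 := by
      rcases (hf_nonneg 0 le_rfl).lt_or_eq with h | h
      · exact h
      · exfalso
        have hmem : (t₀ + 1 : ℝ) ∈ S :=
          ⟨by linarith, by rw [← h]; simpa [← h] using hf_nonneg (t₀ + 1) (by linarith)⟩
        have := le_csSup hbdd hmem
        linarith
    have hsup : sSup (Real.toEReal '' S) = (t₀ : EReal) := by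
      apply le_antisymm
      · apply sSup_le
        rintro x ⟨s, hs, rfl⟩
        exact EReal.coe_le_coe_iff.2 (le_csSup hbdd hs)
      · by_contra hlt
        push_neg at hlt
        have hne_top : sSup (Real.toEReal '' S) ≠ ⊤ :=
          (hlt.trans (EReal.coe_lt_top t₀)).ne
        have hle_mem : (s₀ : EReal) ≤ sSup (Real.toEReal '' S) :=
          le_sSup (mem_image_of_mem _ hs₀)
        have hne_bot : sSup (Real.toEReal '' S) ≠ ⊥ :=
          ((EReal.bot_lt_coe s₀).trans_le hle_mem).ne'
        set m := (sSup (Real.toEReal '' S)).toReal with hm_def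
        have hm : (m : EReal) = sSup (Real.toEReal '' S) := EReal.coe_toReal hne_top hne_bot
        have hub : ∀ x ∈ S, x ≤ m := by
          intro x hx
          have : (x : EReal) ≤ (m : EReal) := by
            rw [hm]; exact le_sSup (mem_image_of_mem _ hx)
          exact EReal.coe_le_coe_iff.1 this
        have : t₀ ≤ m := csSup_le ⟨s₀, hs₀⟩ hub
        rw [← hm] at hlt
        exact absurd (EReal.coe_le_coe_iff.2 this) (not_le.2 hlt)
    have hset : {t : ℝ | 0 < t ∧ (t : EReal) ≤ sSup (Real.toEReal '' S)} = Ioc 0 t₀ := by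
      rw [hsup]; ext t
      simp [mem_Ioc, EReal.coe_le_coe_iff, mem_setOf_eq]
    rw [hset]
    -- pointwise upper bound beyond t₀
    have hnotS : ∀ t, t₀ < t → f t < Real.exp (-c) * f 0 := by
      intro t ht
      by_contra h
      push_neg at h
      have : t ∈ S := ⟨ht₀pos.trans ht, h⟩
      exact absurd (le_csSup hbdd this) (not_le.2 ht)
    have hupper : ∀ t, t₀ < t → f t ≤ f 0 * Real.exp (-(16 * c / (17 * t₀)) * t) := by
      intro t ht
      have htpos : 0 < t := ht₀pos.trans ht
      rcases le_or_gt t (17 * t₀ / 16) with h | h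
      · refine (hnotS t ht).le.trans ?_
        have hexp : 16 * c / (17 * t₀) * t ≤ c := by
          rw [div_mul_eq_mul_div, div_le_iff₀ (by positivity)]
          nlinarith
        calc Real.exp (-c) * f 0 = f 0 * Real.exp (-c) := mul_comm _ _
          _ ≤ f 0 * Real.exp (-(16 * c / (17 * t₀)) * t) :=
            mul_le_mul_of_nonneg_left (Real.exp_le_exp.2 (by linarith)) hf0pos.le
      · set u := 17 * t₀ / 16 with hu_def
        have hu0 : 0 < u := by positivity
        have hut₀ : t₀ < u := by rw [hu_def]; linarith
        have hfu : f u ≤ Real.exp (-c) * f 0 := (hnotS u hut₀).le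
        have := lc_upper f hf_lc hf0pos (hf_nonneg t htpos.le) hu0 h hfu
        refine this.trans (le_of_eq ?_)
        rw [mul_comm (f 0) _]
        congr 2
        rw [hu_def]
        field_simp
    set b : ℝ := (16 * c / 17 - ((n:ℝ) - 1)) / t₀ with hb_def
    have hb : 0 < b := by
      apply div_pos _ ht₀pos
      nlinarith
    set D : ℝ := f 0 * t₀ ^ (n - 1) * Real.exp (-((n:ℝ) - 1)) with hD_def
    have hD0 : 0 ≤ D := by positivity
    have hgupper : ∀ t, t₀ < t → g t ≤ D * Real.exp (-b * t) := by
      intro t ht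
      have htpos : 0 < t := ht₀pos.trans ht
      have h1 : f t ≤ f 0 * Real.exp (-(16 * c / (17 * t₀)) * t) := hupper t ht
      have h2 : t ^ (n - 1) ≤ t₀ ^ (n - 1) * Real.exp (((n:ℝ) - 1) * (t / t₀ - 1)) := by
        have key : t / t₀ ≤ Real.exp (t / t₀ - 1) := by
          have := Real.add_one_le_exp (t / t₀ - 1)
          linarith
        have e0 : t = t₀ * (t / t₀) := by field_simp
        calc t ^ (n - 1) = t₀ ^ (n - 1) * (t / t₀) ^ (n - 1) := by
              rw [← mul_pow, ← e0]
          _ ≤ t₀ ^ (n - 1) * (Real.exp (t / t₀ - 1)) ^ (n - 1) := by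
              gcongr
          _ = t₀ ^ (n - 1) * Real.exp (((n:ℝ) - 1) * (t / t₀ - 1)) := by
              rw [← Real.exp_nat_mul]
              congr 2
              push_cast [Nat.cast_sub (show 1 ≤ n by omega)]
              ring
      calc g t = t ^ (n - 1) * f t := rfl
        _ ≤ (t₀ ^ (n - 1) * Real.exp (((n:ℝ) - 1) * (t / t₀ - 1))) *
              (f 0 * Real.exp (-(16 * c / (17 * t₀)) * t)) := by
            apply mul_le_mul h2 h1 (hf_nonneg t htpos.le) (by positivity)
        _ = D * Real.exp (-b * t) := by
            have hexp_eq : ((n:ℝ) - 1) * (t / t₀ - 1) + -(16 * c / (17 * t₀)) * t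
                = -((n:ℝ) - 1) + -b * t := by
              rw [hb_def]; field_simp; ring
            rw [show (t₀ ^ (n - 1) * Real.exp (((n:ℝ) - 1) * (t / t₀ - 1))) *
                  (f 0 * Real.exp (-(16 * c / (17 * t₀)) * t))
                = f 0 * t₀ ^ (n - 1) *
                  Real.exp (((n:ℝ) - 1) * (t / t₀ - 1) + -(16 * c / (17 * t₀)) * t) from by
                rw [Real.exp_add]; ring,
              hexp_eq, hD_def, Real.exp_add]
            ring
    -- measurability/integrability
    have hmeas : AEStronglyMeasurable g (volume.restrict (Ioi (0:ℝ))) :=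
      ((continuous_pow (n - 1)).aestronglyMeasurable).mul hf_int.aestronglyMeasurable
    have hint_Ioc : IntegrableOn g (Ioc 0 t₀) := by
      have h1 : IntegrableOn f (Ioc 0 t₀) := hf_int.mono_set Ioc_subset_Ioi_self
      refine Integrable.bdd_mul (c := t₀ ^ (n - 1)) h1 ((continuous_pow (n - 1)).aestronglyMeasurable) ?_
      filter_upwards [ae_restrict_mem measurableSet_Ioc] with t ht
      rw [Real.norm_eq_abs, abs_of_nonneg (pow_nonneg ht.1.le _)]
      exact pow_le_pow_left₀ ht.1.le ht.2 _
    have hint_exp : IntegrableOn (fun t : ℝ => D * Real.exp (-b * t)) (Ioi t₀) :=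
      (exp_neg_integrableOn_Ioi t₀ hb).const_mul D
    have hint_Ioi_t₀ : IntegrableOn g (Ioi t₀) := by
      refine Integrable.mono' hint_exp
        (hmeas.mono_measure (Measure.restrict_mono (Ioi_subset_Ioi ht₀pos.le) le_rfl)) ?_
      filter_upwards [ae_restrict_mem measurableSet_Ioi] with t ht
      rw [Real.norm_eq_abs, abs_of_nonneg (hg_nonneg t (ht₀pos.trans ht))]
      exact hgupper t ht
    have hsplit : ∫ t in Ioi (0:ℝ), g t =
        (∫ t in Ioc 0 t₀, g t) + ∫ t in Ioi t₀, g t := by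
      rw [← setIntegral_union (Ioc_disjoint_Ioi le_rfl) measurableSet_Ioi hint_Ioc hint_Ioi_t₀,
        Ioc_union_Ioi_eq_Ioi ht₀pos.le]
    -- tail bound
    have hT : ∫ t in Ioi t₀, g t ≤ f 0 * t₀ ^ n * Real.exp (-(16 * c / 17)) := by
      have h1 : ∫ t in Ioi t₀, g t ≤ ∫ t in Ioi t₀, D * Real.exp (-b * t) :=
        setIntegral_mono_on hint_Ioi_t₀ hint_exp measurableSet_Ioi fun t ht => hgupper t ht
      have h2 : ∫ t in Ioi t₀, D * Real.exp (-b * t) = D * (Real.exp (-b * t₀) / b) := by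
        rw [integral_const_mul]
        congr 1
        have h3 := integral_comp_mul_left_Ioi (fun x : ℝ => Real.exp (-x)) t₀ hb
        rw [integral_exp_neg_Ioi] at h3
        calc ∫ t in Ioi t₀, Real.exp (-b * t) = ∫ x in Ioi t₀, Real.exp (-(b * x)) := by
              simp only [neg_mul]
          _ = b⁻¹ • Real.exp (-(b * t₀)) := h3
          _ = Real.exp (-b * t₀) / b := by rw [smul_eq_mul, neg_mul]; ring
      have hbt₀ : b * t₀ = 16 * c / 17 - ((n:ℝ) - 1) := by
        rw [hb_def]; field_simp
      have h16 : 1 ≤ 16 * c / 17 - ((n:ℝ) - 1) := by linarith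
      have hbinv : 1 / b ≤ t₀ := by
        rw [div_le_iff₀ hb]
        nlinarith [hbt₀]
      have hpow : t₀ ^ (n - 1) * t₀ = t₀ ^ n := by
        rw [← pow_succ]
        congr 1
        omega
      calc ∫ t in Ioi t₀, g t ≤ D * (Real.exp (-b * t₀) / b) := h1.trans (le_of_eq h2)
        _ = D * Real.exp (-b * t₀) * (1 / b) := by ring
        _ ≤ D * Real.exp (-b * t₀) * t₀ := by
            apply mul_le_mul_of_nonneg_left hbinv (by positivity)
        _ = f 0 * t₀ ^ n * Real.exp (-(16 * c / 17)) := by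
            rw [hD_def, neg_mul, hbt₀]
            rw [show f 0 * t₀ ^ (n-1) * Real.exp (-((n:ℝ)-1)) *
                Real.exp (-(16 * c / 17 - ((n:ℝ)-1))) * t₀
              = f 0 * (t₀ ^ (n-1) * t₀) *
                (Real.exp (-((n:ℝ)-1)) * Real.exp (-(16 * c / 17 - ((n:ℝ)-1)))) by ring,
              hpow, ← Real.exp_add]
            congr 2
            ring
    -- head bound
    set a : ℝ := t₀ / α with ha_def
    have hα0 : (0:ℝ) < α := by linarith
    have ha : 0 < a := by positivity
    have h2a : 2 * a < 15 * t₀ / 16 := by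
      rw [ha_def]
      calc 2 * (t₀ / α) ≤ 2 * (t₀ / 5) := by gcongr
        _ < 15 * t₀ / 16 := by linarith
    have h2at₀ : 2 * a ≤ t₀ := by linarith
    obtain ⟨s, hsS, hs15⟩ := exists_lt_of_lt_csSup ⟨s₀, hs₀⟩
      (show 15 * t₀ / 16 < t₀ by linarith)
    have hlower : ∀ t ∈ Ioc a (2 * a), f 0 * Real.exp (-(32 * (n:ℝ) / 15)) ≤ f t := by
      rintro t ⟨ht1, ht2⟩
      have htpos : 0 < t := ha.trans ht1
      have hts : t < s := by linarith
      have hkey := lc_lower f hf_lc hf0pos htpos hts hsS.2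
      have hs0 : 0 < s := by linarith
      have hαt : α * t ≤ 2 * t₀ := by
        have h := mul_le_mul_of_nonneg_left ht2 hα0.le
        have he : α * (2 * a) = 2 * t₀ := by rw [ha_def]; field_simp
        linarith [he ▸ h]
      have hn0 : (0:ℝ) ≤ (n:ℝ) := by positivity
      have hct : c * t ≤ 2 * (n:ℝ) * t₀ := by
        have := mul_le_mul_of_nonneg_left hαt hn0
        rw [hc_def]; nlinarith
      have hcs : 2 * (n:ℝ) * t₀ ≤ 32 * (n:ℝ) / 15 * s := by
        have := mul_le_mul_of_nonneg_left hs15.le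
          (show (0:ℝ) ≤ 32 * (n:ℝ) / 15 by positivity)
        nlinarith
      have hcts : c * (t / s) ≤ 32 * (n:ℝ) / 15 := by
        rw [mul_div_assoc', div_le_iff₀ hs0]
        nlinarith
      calc f 0 * Real.exp (-(32 * (n:ℝ) / 15)) = Real.exp (-(32 * (n:ℝ) / 15)) * f 0 :=
            mul_comm _ _
        _ ≤ Real.exp (-(c * (t / s))) * f 0 :=
            mul_le_mul_of_nonneg_right (Real.exp_le_exp.2 (by linarith)) hf0pos.le
        _ ≤ f t := hkey
    have hint_a : IntegrableOn g (Ioc a (2 * a)) :=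
      hint_Ioc.mono_set (Ioc_subset_Ioc ha.le h2at₀)
    set K : ℝ := a ^ (n - 1) * (f 0 * Real.exp (-(32 * (n:ℝ) / 15))) with hK_def
    have hH : K * a ≤ ∫ t in Ioc a (2 * a), g t := by
      have hconst : ∫ _ in Ioc a (2 * a), K ∂volume = K * a := by
        rw [setIntegral_const, measureReal_def, Real.volume_Ioc, smul_eq_mul,
          ENNReal.toReal_ofReal (by linarith)]
        ring_nf
      rw [← hconst]
      apply setIntegral_mono_on
        (integrableOn_const measure_Ioc_lt_top.ne) hint_a measurableSet_Ioc
      rintro t ht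
      have htpos : 0 < t := ha.trans ht.1
      calc K = a ^ (n - 1) * (f 0 * Real.exp (-(32 * (n:ℝ) / 15))) := rfl
        _ ≤ t ^ (n - 1) * f t := by
            apply mul_le_mul (pow_le_pow_left₀ ha.le ht.1.le _) (hlower t ht)
              (by positivity) (by positivity)
    have hHJ : ∫ t in Ioc a (2 * a), g t ≤ ∫ t in Ioc 0 t₀, g t := by
      apply setIntegral_mono_set hint_Ioc
      · filter_upwards [ae_restrict_mem measurableSet_Ioc] with t ht
        exact hg_nonneg t ht.1
      · exact HasSubset.Subset.eventuallyLE (Ioc_subset_Ioc ha.le h2at₀)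
    -- numeric comparison
    have hnum : f 0 * t₀ ^ n * Real.exp (-(16 * c / 17)) ≤
        Real.exp (-(c / 8)) * (K * a) := by
      have hαpow : (0:ℝ) < α ^ n := by positivity
      have hkey : Real.exp (-(16 * c / 17)) * α ^ n ≤
          Real.exp (-(c / 8)) * Real.exp (-(32 * (n:ℝ) / 15)) := by
        rw [← Real.exp_log hαpow, ← Real.exp_add, ← Real.exp_add, Real.log_pow]
        apply Real.exp_le_exp.2
        have haux := aux_log_bound hα
        have hn0 : (0:ℝ) ≤ (n:ℝ) := by positivity
        nlinarith [mul_le_mul_of_nonneg_left haux hn0]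
      have hapow : a ^ (n - 1) * a = t₀ ^ n / α ^ n := by
        rw [← pow_succ, show n - 1 + 1 = n by omega, ha_def, div_pow]
      calc f 0 * t₀ ^ n * Real.exp (-(16 * c / 17))
          = f 0 * (t₀ ^ n / α ^ n) * (Real.exp (-(16 * c / 17)) * α ^ n) := by
            field_simp
        _ ≤ f 0 * (t₀ ^ n / α ^ n) * (Real.exp (-(c / 8)) * Real.exp (-(32 * (n:ℝ) / 15))) := by
            apply mul_le_mul_of_nonneg_left hkey (by positivity)
        _ = Real.exp (-(c / 8)) * (K * a) := by
            rw [hK_def, show a ^ (n-1) * (f 0 * Real.exp (-(32 * (n:ℝ)/15))) * a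
              = (a ^ (n-1) * a) * (f 0 * Real.exp (-(32 * (n:ℝ)/15))) by ring, hapow]
            ring
    -- assemble
    have hT_nonneg : 0 ≤ ∫ t in Ioi t₀, g t :=
      setIntegral_nonneg measurableSet_Ioi fun t ht => hg_nonneg t (ht₀pos.trans ht)
    have hJ_nonneg : 0 ≤ ∫ t in Ioc 0 t₀, g t :=
      setIntegral_nonneg measurableSet_Ioc fun t ht => hg_nonneg t ht.1
    have hTJ : ∫ t in Ioi t₀, g t ≤ Real.exp (-(c / 8)) * ∫ t in Ioc 0 t₀, g t := by
      calc ∫ t in Ioi t₀, g t ≤ f 0 * t₀ ^ n * Real.exp (-(16 * c / 17)) := hT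
        _ ≤ Real.exp (-(c / 8)) * (K * a) := hnum
        _ ≤ Real.exp (-(c / 8)) * ∫ t in Ioc 0 t₀, g t := by
            apply mul_le_mul_of_nonneg_left (hH.trans hHJ) hε0
    rw [hsplit]
    have hε1 : Real.exp (-(c / 8)) ≤ 1 := Real.exp_le_one_iff.2 (by linarith)
    nlinarith [mul_nonneg hε0 hT_nonneg]
end
end

section
/- Let n ≥ 2 be an integer, let α ≥ 5, and let f: ℝⁿ → [0,∞) be a log-concave function with ∫_{ℝⁿ} f = 1. Denote K = { x ∈ ℝⁿ : f(x) ≥ e^{−αn} f(0) }. Then ∫_K f(x) dx ≥ 1 − e^{−αn/8}. -/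
open MeasureTheory Real Set Filter
open scoped ENNReal NNReal RealInnerProductSpace Pointwise

noncomputable section

/-- Key estimate: for a nonnegative log-concave `f` with `f 0 > 0`,
`∫ √f ≤ 2^n (f 0)^{-1/2} ∫ f`. -/
lemma sqrt_lintegral_bound {n : ℕ} (f : EuclideanSpace ℝ (Fin n) → ℝ)
    (hf_nonneg : ∀ x, 0 ≤ f x) (hf_lc : LogConcave f)
    (hm : AEMeasurable f) (hf0 : 0 < f 0) :
    ∫⁻ x, ENNReal.ofReal (Real.sqrt (f x)) ≤
      2 ^ n * ((ENNReal.ofReal (Real.sqrt (f 0)))⁻¹ * ∫⁻ x, ENNReal.ofReal (f x)) := by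
  have hsf0 : 0 < Real.sqrt (f 0) := Real.sqrt_pos.2 hf0
  have hmsqrt : AEMeasurable (fun x => Real.sqrt (f x)) :=
    Real.continuous_sqrt.measurable.comp_aemeasurable hm
  -- layer cake for √f
  have h1 : ∫⁻ x, ENNReal.ofReal (Real.sqrt (f x)) =
      ∫⁻ t in Ioi (0:ℝ), volume {x | t < Real.sqrt (f x)} :=
    lintegral_eq_lintegral_meas_lt volume
      (ae_of_all _ fun x => Real.sqrt_nonneg (f x)) hmsqrt
  -- the key measure bound at each level
  have key : ∀ t : ℝ, 0 < t →
      volume {x : EuclideanSpace ℝ (Fin n) | t < Real.sqrt (f x)} ≤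
        2 ^ n * volume {x : EuclideanSpace ℝ (Fin n) | t * Real.sqrt (f 0) < f x} := by
    intro t ht
    set S : Set (EuclideanSpace ℝ (Fin n)) := {x | t < Real.sqrt (f x)} with hS
    set T : Set (EuclideanSpace ℝ (Fin n)) := {x | t * Real.sqrt (f 0) < f x} with hT
    have hincl : (2⁻¹ : ℝ) • S ⊆ T := by
      rintro _ ⟨x, hx, rfl⟩
      have hx' : t < Real.sqrt (f x) := hx
      have hfc := hf_lc x 0 (1/2) (by norm_num) (by norm_num)
      have h12 : (1 : ℝ) - 1/2 = 1/2 := by norm_num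
      rw [h12, smul_zero, add_zero] at hfc
      have hx2 : f x ^ ((1:ℝ)/2) = Real.sqrt (f x) := (Real.sqrt_eq_rpow (f x)).symm
      have h02 : f 0 ^ ((1:ℝ)/2) = Real.sqrt (f 0) := (Real.sqrt_eq_rpow (f 0)).symm
      rw [hx2, h02] at hfc
      have : t * Real.sqrt (f 0) < Real.sqrt (f x) * Real.sqrt (f 0) :=
        mul_lt_mul_of_pos_right hx' hsf0
      have h2x : ((1:ℝ)/2) • x = (2⁻¹ : ℝ) • x := by norm_num
      calc t * Real.sqrt (f 0) < Real.sqrt (f x) * Real.sqrt (f 0) := this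
        _ ≤ f (((1:ℝ)/2) • x) := hfc
        _ = f ((2⁻¹ : ℝ) • x) := by rw [h2x]
    have hmeas : volume ((2⁻¹ : ℝ) • S) ≤ volume T := measure_mono hincl
    rw [Measure.addHaar_smul_of_nonneg volume (by norm_num : (0:ℝ) ≤ 2⁻¹) S,
      finrank_euclideanSpace_fin] at hmeas
    have hco : ENNReal.ofReal ((2⁻¹ : ℝ) ^ n) = (2 : ℝ≥0∞)⁻¹ ^ n := by
      rw [ENNReal.ofReal_pow (by norm_num)]
      congr 1
      rw [ENNReal.ofReal_inv_of_pos (by norm_num : (0:ℝ) < 2)]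
      norm_num
    have hcancel : (2 : ℝ≥0∞) ^ n * (2 : ℝ≥0∞)⁻¹ ^ n = 1 := by
      rw [← mul_pow, ENNReal.mul_inv_cancel (by norm_num) (by norm_num), one_pow]
    calc volume S = (2:ℝ≥0∞) ^ n * ((2:ℝ≥0∞)⁻¹ ^ n * volume S) := by
          rw [← mul_assoc, hcancel, one_mul]
      _ ≤ (2:ℝ≥0∞) ^ n * volume T := by
          rw [← hco]
          exact mul_le_mul_right hmeas _
  -- rewrite sublevel sets of √f
  have h2 : ∫⁻ t in Ioi (0:ℝ), volume {x | t < Real.sqrt (f x)} ≤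
      2 ^ n * ∫⁻ t in Ioi (0:ℝ),
        volume {x : EuclideanSpace ℝ (Fin n) | t * Real.sqrt (f 0) < f x} := by
    rw [← lintegral_const_mul' _ _ (by simp : (2:ℝ≥0∞)^n ≠ ∞)]
    refine lintegral_mono_ae ((ae_restrict_iff' measurableSet_Ioi).2 (ae_of_all _ key))
  -- identify the remaining integral via layer cake for f / √(f 0)
  have h3 : ∫⁻ t in Ioi (0:ℝ),
      volume {x : EuclideanSpace ℝ (Fin n) | t * Real.sqrt (f 0) < f x} =
      ∫⁻ x, ENNReal.ofReal (f x / Real.sqrt (f 0)) := by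
    rw [lintegral_eq_lintegral_meas_lt volume
      (ae_of_all _ fun x => div_nonneg (hf_nonneg x) hsf0.le) (hm.div_const _)]
    refine setLIntegral_congr_fun measurableSet_Ioi (fun t ht => ?_)
    congr 1
    ext x
    simp only [mem_setOf_eq]
    rw [lt_div_iff₀ hsf0]
  have h4 : ∫⁻ x, ENNReal.ofReal (f x / Real.sqrt (f 0)) =
      (ENNReal.ofReal (Real.sqrt (f 0)))⁻¹ * ∫⁻ x, ENNReal.ofReal (f x) := by
    have : ∀ x, ENNReal.ofReal (f x / Real.sqrt (f 0)) =
        (ENNReal.ofReal (Real.sqrt (f 0)))⁻¹ * ENNReal.ofReal (f x) := by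
      intro x
      rw [ENNReal.ofReal_div_of_pos hsf0, div_eq_mul_inv, mul_comm]
    simp_rw [this]
    rw [lintegral_const_mul' _ _ (by simp [hsf0.le, Real.sqrt_pos.2 hf0] : (ENNReal.ofReal (Real.sqrt (f 0)))⁻¹ ≠ ∞)]
  calc ∫⁻ x, ENNReal.ofReal (Real.sqrt (f x)) =
      ∫⁻ t in Ioi (0:ℝ), volume {x | t < Real.sqrt (f x)} := h1
    _ ≤ 2 ^ n * ∫⁻ t in Ioi (0:ℝ),
        volume {x : EuclideanSpace ℝ (Fin n) | t * Real.sqrt (f 0) < f x} := h2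
    _ = 2 ^ n * ((ENNReal.ofReal (Real.sqrt (f 0)))⁻¹ * ∫⁻ x, ENNReal.ofReal (f x)) := by
        rw [h3, h4]

/-- Klartag, Corollary 5.3: for a log-concave probability density `f` on ℝⁿ and `α ≥ 5`, the
super-level set `K = {x : f(x) ≥ e^{−αn} f(0)}` carries almost all mass:
`∫_K f ≥ 1 − e^{−αn/8}`. -/
theorem superlevel_set_mass
    (n : ℕ) (hn : 2 ≤ n) (α : ℝ) (hα : 5 ≤ α)
    (f : EuclideanSpace ℝ (Fin n) → ℝ)
    (hf_nonneg : ∀ x, 0 ≤ f x) (hf_lc : LogConcave f)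
    (hf_int : Integrable f) (hf_mass : ∫ x, f x = 1) :
    1 - Real.exp (-(α * n / 8)) ≤
      ∫ x in {x : EuclideanSpace ℝ (Fin n) | Real.exp (-(α * n)) * f 0 ≤ f x}, f x := by
  classical
  set s : ℝ := α * n with hs_def
  have hn2 : (2:ℝ) ≤ (n:ℝ) := by exact_mod_cast hn
  have hsn : 5 * (n:ℝ) ≤ s := by
    have := mul_le_mul_of_nonneg_right hα (by positivity : (0:ℝ) ≤ (n:ℝ))
    linarith [this]
  by_cases h0 : f 0 = 0
  · have hK : {x : EuclideanSpace ℝ (Fin n) | Real.exp (-s) * f 0 ≤ f x} = univ := by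
      ext x; simp [h0, hf_nonneg x]
    rw [hK, Measure.restrict_univ, hf_mass]
    have := Real.exp_pos (-(s/8))
    have hform : -(s/8) = -(s/8) := rfl
    linarith [Real.exp_pos (-(s / 8))]
  · have hf0 : 0 < f 0 := lt_of_le_of_ne (hf_nonneg 0) (Ne.symm h0)
    have hsf0 : 0 < Real.sqrt (f 0) := Real.sqrt_pos.2 hf0
    set c : ℝ := Real.exp (-s) * f 0 with hc_def
    have hc : 0 < c := mul_pos (Real.exp_pos _) hf0
    set K : Set (EuclideanSpace ℝ (Fin n)) := {x | c ≤ f x} with hK_def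
    -- K is convex, hence null measurable
    have hKconv : Convex ℝ K := by
      intro x hx y hy a b ha hb hab
      rcases eq_or_lt_of_le ha with rfl | ha'
      · simp only [zero_add] at hab; subst hab; simpa using hy
      rcases eq_or_lt_of_le hb with rfl | hb'
      · simp only [add_zero] at hab; subst hab; simpa using hx
      have hb1 : b = 1 - a := by linarith
      subst hb1
      have ha1 : a < 1 := by linarith
      have hlc := hf_lc x y a ha' ha1
      have hcx : c ^ a ≤ f x ^ a := Real.rpow_le_rpow hc.le hx ha
      have hcy : c ^ (1-a) ≤ f y ^ (1-a) := Real.rpow_le_rpow hc.le hy (by linarith)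
      have hcc : c ^ a * c ^ (1-a) = c := by
        rw [← Real.rpow_add hc]; norm_num
      have : c ≤ f x ^ a * f y ^ (1-a) := by
        rw [← hcc]
        exact mul_le_mul hcx hcy (Real.rpow_nonneg hc.le _)
          (Real.rpow_nonneg (hf_nonneg x) _)
      exact this.trans hlc
    have hmK : NullMeasurableSet K volume := hKconv.nullMeasurableSet volume
    have hmf : AEMeasurable f volume := hf_int.aemeasurable
    set φ : EuclideanSpace ℝ (Fin n) → ℝ≥0∞ := fun x => ENNReal.ofReal (f x) with hφ_def
    have htot : ∫⁻ x, φ x = 1 := by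
      rw [hφ_def, ← ofReal_integral_eq_lintegral_ofReal hf_int (ae_of_all _ hf_nonneg),
        hf_mass, ENNReal.ofReal_one]
    -- tail bound
    have hsqrt_c : Real.sqrt c = Real.exp (-(s/2)) * Real.sqrt (f 0) := by
      rw [hc_def, Real.sqrt_mul (Real.exp_pos _).le]
      congr 1
      have h2 : Real.exp (-(s/2)) * Real.exp (-(s/2)) = Real.exp (-s) := by
        rw [← Real.exp_add]; ring_nf
      rw [← h2, Real.sqrt_mul_self (Real.exp_pos _).le]
    have htail : ∫⁻ x in Kᶜ, φ x ≤ ENNReal.ofReal (Real.exp (-(s/8))) := by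
      have hpt : ∀ x ∈ Kᶜ, φ x ≤
          ENNReal.ofReal (Real.sqrt c) * ENNReal.ofReal (Real.sqrt (f x)) := by
        intro x hx
        have hxlt : f x < c := by
          simp only [hK_def, mem_compl_iff, mem_setOf_eq, not_le] at hx
          exact hx
        have h1 : f x = Real.sqrt (f x) * Real.sqrt (f x) :=
          (Real.mul_self_sqrt (hf_nonneg x)).symm
        have h2 : Real.sqrt (f x) ≤ Real.sqrt c := Real.sqrt_le_sqrt hxlt.le
        have h3 : f x ≤ Real.sqrt c * Real.sqrt (f x) := by
          calc f x = Real.sqrt (f x) * Real.sqrt (f x) := h1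
            _ ≤ Real.sqrt c * Real.sqrt (f x) :=
              mul_le_mul_of_nonneg_right h2 (Real.sqrt_nonneg _)
        rw [hφ_def]
        calc ENNReal.ofReal (f x) ≤ ENNReal.ofReal (Real.sqrt c * Real.sqrt (f x)) :=
              ENNReal.ofReal_le_ofReal h3
          _ = ENNReal.ofReal (Real.sqrt c) * ENNReal.ofReal (Real.sqrt (f x)) :=
              ENNReal.ofReal_mul (Real.sqrt_nonneg _)
      have step1 : ∫⁻ x in Kᶜ, φ x ≤
          ENNReal.ofReal (Real.sqrt c) * ∫⁻ x, ENNReal.ofReal (Real.sqrt (f x)) := by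
        calc ∫⁻ x in Kᶜ, φ x
            ≤ ∫⁻ x in Kᶜ, ENNReal.ofReal (Real.sqrt c) * ENNReal.ofReal (Real.sqrt (f x)) := by
              refine lintegral_mono_ae ((ae_restrict_iff'₀ hmK.compl).2 (ae_of_all _ hpt))
          _ = ENNReal.ofReal (Real.sqrt c) * ∫⁻ x in Kᶜ, ENNReal.ofReal (Real.sqrt (f x)) :=
              lintegral_const_mul' _ _ ENNReal.ofReal_ne_top
          _ ≤ ENNReal.ofReal (Real.sqrt c) * ∫⁻ x, ENNReal.ofReal (Real.sqrt (f x)) := by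
              exact mul_le_mul_right (setLIntegral_le_lintegral _ _) _
      have step2 := sqrt_lintegral_bound f hf_nonneg hf_lc hmf hf0
      rw [htot, mul_one] at step2
      have step3 : ∫⁻ x in Kᶜ, φ x ≤
          ENNReal.ofReal (Real.sqrt c) * (2 ^ n * (ENNReal.ofReal (Real.sqrt (f 0)))⁻¹) :=
        step1.trans (mul_le_mul_right step2 _)
      have hcancel : ENNReal.ofReal (Real.sqrt c) * (2 ^ n * (ENNReal.ofReal (Real.sqrt (f 0)))⁻¹)
          = ENNReal.ofReal (Real.exp (-(s/2))) * 2 ^ n := by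
        rw [hsqrt_c, ENNReal.ofReal_mul (Real.exp_pos _).le]
        rw [mul_comm ((2:ℝ≥0∞)^n) _, ← mul_assoc, mul_assoc _ _ (ENNReal.ofReal (Real.sqrt (f 0)))⁻¹]
        rw [mul_assoc (ENNReal.ofReal (Real.exp (-(s/2))))]
        rw [ENNReal.mul_inv_cancel (by simp [hsf0] : ENNReal.ofReal (Real.sqrt (f 0)) ≠ 0)
          ENNReal.ofReal_ne_top, one_mul]
      rw [hcancel] at step3
      refine step3.trans ?_
      have hreal : Real.exp (-(s/2)) * 2 ^ n ≤ Real.exp (-(s/8)) := by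
        have h2e : (2:ℝ) ≤ Real.exp 1 := by
          have := Real.add_one_le_exp (1:ℝ)
          linarith
        have hpow : (2:ℝ) ^ n ≤ Real.exp 1 ^ n :=
          pow_le_pow_left₀ (by norm_num) h2e n
        have hexpn : Real.exp 1 ^ n = Real.exp (n:ℝ) := by
          rw [← Real.exp_nat_mul]; norm_num
        have : Real.exp (-(s/2)) * 2 ^ n ≤ Real.exp (-(s/2)) * Real.exp (n:ℝ) := by
          rw [hexpn] at hpow
          exact mul_le_mul_of_nonneg_left hpow (Real.exp_pos _).le
        refine this.trans ?_
        rw [← Real.exp_add]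
        apply Real.exp_le_exp.2
        linarith
      calc ENNReal.ofReal (Real.exp (-(s/2))) * 2 ^ n
          = ENNReal.ofReal (Real.exp (-(s/2)) * 2 ^ n) := by
            rw [ENNReal.ofReal_mul (Real.exp_pos _).le]
            congr 1
            rw [ENNReal.ofReal_pow (by norm_num)]
            norm_num
        _ ≤ ENNReal.ofReal (Real.exp (-(s/8))) := ENNReal.ofReal_le_ofReal hreal
    -- split the total mass
    obtain ⟨K', hK'm, hKK'⟩ : ∃ K', MeasurableSet K' ∧ K =ᵐ[volume] K' :=
      ⟨toMeasurable volume K, measurableSet_toMeasurable _ _,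
        (NullMeasurableSet.toMeasurable_ae_eq hmK).symm⟩
    have hsplit : (∫⁻ x in K, φ x) + ∫⁻ x in Kᶜ, φ x = 1 := by
      rw [Measure.restrict_congr_set hKK', Measure.restrict_congr_set hKK'.compl,
        lintegral_add_compl _ hK'm, htot]
    have hKle : ∫⁻ x in K, φ x ≤ 1 := le_of_add_le_left hsplit.le
    have hKne : ∫⁻ x in K, φ x ≠ ∞ := (hKle.trans_lt ENNReal.one_lt_top).ne
    have hKlow : 1 - ENNReal.ofReal (Real.exp (-(s/8))) ≤ ∫⁻ x in K, φ x := by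
      have : (1:ℝ≥0∞) - ∫⁻ x in Kᶜ, φ x ≤ ∫⁻ x in K, φ x := by
        rw [← hsplit]
        exact tsub_le_iff_right.2 le_rfl
      refine le_trans ?_ this
      exact tsub_le_tsub_left htail _
    -- back to the Bochner integral
    have hIeq : ∫ x in K, f x = (∫⁻ x in K, φ x).toReal := by
      rw [hφ_def]
      exact integral_eq_lintegral_of_nonneg_ae (ae_of_all _ hf_nonneg)
        hf_int.aestronglyMeasurable.restrict
    rw [hIeq]
    have hTle : ENNReal.ofReal (Real.exp (-(s/8))) ≤ 1 := by
      rw [← ENNReal.ofReal_one]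
      apply ENNReal.ofReal_le_ofReal
      apply Real.exp_le_one_iff.2
      have : (0:ℝ) < s := by linarith
      linarith
    have := ENNReal.toReal_mono hKne hKlow
    rw [ENNReal.toReal_sub_of_le hTle ENNReal.one_ne_top, ENNReal.toReal_one,
      ENNReal.toReal_ofReal (Real.exp_pos _).le] at this
    have hform : -(s/8) = -(s/8) := rfl
    calc 1 - Real.exp (-(s/8)) = 1 - Real.exp (-(s/8)) := rfl
      _ ≤ (∫⁻ x in K, φ x).toReal := this
end
end
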